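/- arXiv:0711.1691 — 4 statements merged into one kernel-verified Lean document; each statement's English description precedes it below -/
import Mathlib

section
/- Let d ≥ 1 and let K be a completely balanced simplicial complex of dimension d−1 on n vertices, i.e., the vertices of K can be colored with d colors so that every face of K contains at most one vertex of each color. If n ≥ 3d, then m̃_r(K) ≤ r + 1 for every 1 ≤ r ≤ n−d; consequently (∏_{r=1}^{n−d} m̃_r(K))/(n−d)! ≤ n − d + 1. -/
open Finset

/-- A simplicial complex on a finite vertex set: a collection of finite subsets
(faces) of the vertex set, closed under inclusion, containing every singleton. -/
structure SC (α : Type*) [DecidableEq α] where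
  verts : Finset α
  faces : Finset (Finset α)
  subset_verts : ∀ F ∈ faces, F ⊆ verts
  down_closed : ∀ F ∈ faces, ∀ G, G ⊆ F → G ∈ faces
  singleton_mem : ∀ v ∈ verts, {v} ∈ faces

namespace SC

variable {α : Type*} [DecidableEq α]

/-- `dimP1 K = dim K + 1`: the maximal number of vertices of a face. -/
def dimP1 (K : SC α) : ℕ := K.faces.sup Finset.card

/-- The number of faces with exactly `j` vertices, i.e. `f_{j-1}(K)`. -/
def fCard (K : SC α) (j : ℕ) : ℕ := (K.faces.filter (fun F => F.card = j)).card

/-- The minimal non-faces of `K`: subsets of the vertex set which are not faces,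
all of whose proper subsets are faces. -/
def minNonFaces (K : SC α) : Finset (Finset α) :=
  K.verts.powerset.filter (fun F => F ∉ K.faces ∧ ∀ G ∈ F.powerset, G ≠ F → G ∈ K.faces)

/-- The `i`-th minimal Taylor shift `m̃_i(K)`: the minimal number of vertices covered by
a set of exactly `i` minimal non-faces of `K`. -/
noncomputable def mT (K : SC α) (i : ℕ) : ℕ :=
  sInf {n | ∃ T ⊆ K.minNonFaces, T.card = i ∧ (T.sup id).card = n}

/-- The `i`-th maximal Taylor shift `M̃_i(K)`: the maximal number of vertices covered by
a set of exactly `i` minimal non-faces of `K`. -/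
noncomputable def MT (K : SC α) (i : ℕ) : ℕ :=
  sSup {n | ∃ T ⊆ K.minNonFaces, T.card = i ∧ (T.sup id).card = n}

/-- The conjectured Taylor upper bound `(∏_{i=1}^{n-d} M̃_i(K))/(n-d)!` on `f_{d-1}(K)`. -/
noncomputable def taylorUBval (K : SC α) : ℚ :=
  (∏ i ∈ Finset.Icc 1 (K.verts.card - K.dimP1), (K.MT i : ℚ)) /
    (Nat.factorial (K.verts.card - K.dimP1))

/-- The conjectured Taylor lower bound `(∏_{i=1}^{n-d} m̃_i(K))/(n-d)!` on `f_{d-1}(K)`. -/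
noncomputable def taylorLBval (K : SC α) : ℚ :=
  (∏ i ∈ Finset.Icc 1 (K.verts.card - K.dimP1), (K.mT i : ℚ)) /
    (Nat.factorial (K.verts.card - K.dimP1))

/-- `K` satisfies the Taylor upper bound: `f_{d-1}(K) ≤ (∏_{i=1}^{n-d} M̃_i(K))/(n-d)!`. -/
def TaylorUB (K : SC α) : Prop := (K.fCard K.dimP1 : ℚ) ≤ K.taylorUBval

/-- `K` satisfies the Taylor lower bound: `f_{d-1}(K) ≥ (∏_{i=1}^{n-d} m̃_i(K))/(n-d)!`. -/
def TaylorLB (K : SC α) : Prop := K.taylorLBval ≤ (K.fCard K.dimP1 : ℚ)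

/-- The induced subcomplex `K[W]`: the faces of `K` contained in `W`. -/
def induced (K : SC α) (W : Finset α) : SC α where
  verts := K.verts ∩ W
  faces := K.faces.filter (fun F => F ⊆ W)
  subset_verts := by
    intro F hF
    simp only [mem_filter] at hF
    exact subset_inter (K.subset_verts F hF.1) hF.2
  down_closed := by
    intro F hF G hG
    simp only [mem_filter] at hF ⊢
    exact ⟨K.down_closed F hF.1 G hG, hG.trans hF.2⟩
  singleton_mem := by
    intro v hv
    simp only [mem_inter] at hv
    simp only [mem_filter, singleton_subset_iff]
    exact ⟨K.singleton_mem v hv.1, hv.2⟩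

end SC

namespace TaylorAux


lemma le_choose_two_add_one (s : ℕ) : s ≤ s.choose 2 + 1 := by
  match s with
  | 0 => simp
  | (k+1) =>
    have h : (k+1).choose 2 = k.choose 1 + k.choose 2 := Nat.choose_succ_succ k 1
    rw [Nat.choose_one_right] at h
    omega

lemma two_mul_le_choose (a : ℕ) (ha : 3 ≤ a) : 2 * a ≤ a.choose 2 + 3 := by
  induction a, ha using Nat.le_induction with
  | base => decide
  | succ a ha ih =>
    have h : (a+1).choose 2 = a.choose 1 + a.choose 2 := Nat.choose_succ_succ a 1
    rw [Nat.choose_one_right] at h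
    omega

lemma self_le_choose (a : ℕ) (ha : 3 ≤ a) : a ≤ a.choose 2 := by
  have := two_mul_le_choose a ha; omega

lemma zeros_forall₂ (t : List ℕ) : List.Forall₂ (· ≤ ·) (List.replicate t.length 0) t := by
  induction t with
  | nil => simp
  | cons a t ih => simpa [List.replicate_succ] using List.Forall₂.cons (Nat.zero_le a) ih

lemma big (L : List ℕ) (hL : ∀ a ∈ L, 3 ≤ a) :
    ∀ s, s ≤ L.sum → ∃ u : List ℕ, List.Forall₂ (· ≤ ·) u L ∧ u.sum = s ∧
      s ≤ (u.map (fun x => x.choose 2)).sum + 1 := by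
  induction L with
  | nil =>
    intro s hs
    simp only [List.sum_nil, Nat.le_zero] at hs
    exact ⟨[], List.Forall₂.nil, by simp [hs], by simp [hs]⟩
  | cons a t ih =>
    intro s hs
    by_cases hsa : s ≤ a
    · refine ⟨s :: List.replicate t.length 0, List.Forall₂.cons hsa (zeros_forall₂ t), by simp, ?_⟩
      have := le_choose_two_add_one s
      simp [List.map_replicate]
      omega
    · simp only [List.sum_cons] at hs
      obtain ⟨u, hu, hsum, hineq⟩ := ih (fun b hb => hL b (List.mem_cons_of_mem a hb)) (s - a) (by omega)
      have ha3 : 3 ≤ a := hL a List.mem_cons_self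
      have hac := self_le_choose a ha3
      refine ⟨a :: u, List.Forall₂.cons le_rfl hu, by simp [hsum]; omega, ?_⟩
      simp only [List.map_cons, List.sum_cons]
      omega

lemma small (L : List ℕ) (hL : ∀ a ∈ L, a ≤ 2) :
    ∀ s, s ≤ L.sum → ∃ u : List ℕ, List.Forall₂ (· ≤ ·) u L ∧ u.sum = s ∧
      s ≤ (u.map (fun x => x.choose 2)).sum + L.length := by
  induction L with
  | nil =>
    intro s hs
    simp only [List.sum_nil, Nat.le_zero] at hs
    exact ⟨[], List.Forall₂.nil, by simp [hs], by simp [hs]⟩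
  | cons a t ih =>
    intro s hs
    by_cases hsa : s ≤ a
    · refine ⟨s :: List.replicate t.length 0, List.Forall₂.cons hsa (zeros_forall₂ t), by simp, ?_⟩
      have := le_choose_two_add_one s
      simp [List.map_replicate]
      omega
    · simp only [List.sum_cons] at hs
      obtain ⟨u, hu, hsum, hineq⟩ := ih (fun b hb => hL b (List.mem_cons_of_mem a hb)) (s - a) (by omega)
      have hac := le_choose_two_add_one a
      refine ⟨a :: u, List.Forall₂.cons le_rfl hu, by simp [hsum]; omega, ?_⟩
      simp only [List.map_cons, List.sum_cons, List.length_cons]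
      omega

lemma sum_bound (B : List ℕ) (hB : ∀ a ∈ B, 3 ≤ a) :
    2 * B.sum ≤ (B.map (fun x => x.choose 2)).sum + 3 * B.length := by
  induction B with
  | nil => simp
  | cons a t ih =>
    have h1 := two_mul_le_choose a (hB a List.mem_cons_self)
    have h2 := ih (fun b hb => hB b (List.mem_cons_of_mem a hb))
    simp only [List.sum_cons, List.map_cons, List.length_cons]
    omega

lemma sum_le_two (S : List ℕ) (hS : ∀ a ∈ S, a ≤ 2) : S.sum ≤ 2 * S.length := by
  induction S with
  | nil => simp
  | cons a t ih =>
    have := hS a List.mem_cons_self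
    have := ih (fun b hb => hS b (List.mem_cons_of_mem a hb))
    simp only [List.sum_cons, List.length_cons]
    omega

lemma key (B S : List ℕ) (hB : ∀ a ∈ B, 3 ≤ a) (hS : ∀ a ∈ S, a ≤ 2)
    (hbal : 3 * (B.length + S.length) ≤ B.sum + S.sum) :
    ∀ s, s ≤ B.sum + S.sum → ∃ u : List ℕ, List.Forall₂ (· ≤ ·) u (B ++ S) ∧ u.sum = s ∧
      s ≤ (u.map (fun x => x.choose 2)).sum + 1 := by
  intro s hs
  by_cases hsB : s ≤ B.sum
  · obtain ⟨u, hu, hsum, hineq⟩ := big B hB s hsB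
    refine ⟨u ++ List.replicate S.length 0, List.rel_append hu (zeros_forall₂ S), ?_, ?_⟩
    · simp [hsum]
    · simp [List.map_replicate]
      omega
  · obtain ⟨u, hu, hsum, hineq⟩ := small S hS (s - B.sum) (by omega)
    have h1 := sum_bound B hB
    have h2 := sum_le_two S hS
    refine ⟨B ++ u, List.rel_append (List.forall₂_same.2 fun x _ => le_rfl) hu, ?_, ?_⟩
    · simp [hsum]; omega
    · simp only [List.map_append, List.sum_append]
      omega

lemma forall₂_of_perm {R : ℕ → ℕ → Prop} {L₁ L₂ : List ℕ} (h : L₁.Perm L₂) :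
    ∀ {u : List ℕ}, List.Forall₂ R u L₂ → ∃ u', u'.Perm u ∧ List.Forall₂ R u' L₁ := by
  induction h with
  | nil => exact fun hu => ⟨_, List.Perm.refl _, hu⟩
  | cons x p ih =>
    intro u hu
    rw [List.forall₂_cons_right_iff] at hu
    obtain ⟨a, u₂, hax, hu₂, rfl⟩ := hu
    obtain ⟨u₂', hperm, hf⟩ := ih hu₂
    exact ⟨a :: u₂', List.Perm.cons a hperm, List.Forall₂.cons hax hf⟩
  | swap x y t =>
    intro u hu
    rw [List.forall₂_cons_right_iff] at hu
    obtain ⟨a, u₂, hay, hu₂, rfl⟩ := hu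
    rw [List.forall₂_cons_right_iff] at hu₂
    obtain ⟨b, u₃, hbx, hu₃, rfl⟩ := hu₂
    exact ⟨b :: a :: u₃, List.Perm.swap a b u₃, List.Forall₂.cons hbx (List.Forall₂.cons hay hu₃)⟩
  | trans p₁ p₂ ih₁ ih₂ =>
    intro u hu
    obtain ⟨u₂, hp₂, hf₂⟩ := ih₂ hu
    obtain ⟨u₁, hp₁, hf₁⟩ := ih₁ hf₂
    exact ⟨u₁, hp₁.trans hp₂, hf₁⟩

lemma num (m : List ℕ) (hbal : 3 * m.length ≤ m.sum) (s : ℕ) (hs : s ≤ m.sum) :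
    ∃ u : List ℕ, List.Forall₂ (· ≤ ·) u m ∧ u.sum = s ∧
      s ≤ (u.map (fun x => x.choose 2)).sum + 1 := by
  set p : ℕ → Bool := fun a => decide (3 ≤ a) with hp
  have hperm : (m.filter p ++ m.filter (fun a => !p a)).Perm m := List.filter_append_perm p m
  set B := m.filter p with hBdef
  set S := m.filter (fun a => !p a) with hSdef
  have hB : ∀ a ∈ B, 3 ≤ a := by
    intro a ha
    have := List.of_mem_filter ha
    simpa [hp] using this
  have hS : ∀ a ∈ S, a ≤ 2 := by
    intro a ha
    have := List.of_mem_filter ha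
    simp [hp] at this
    omega
  have hlen : B.length + S.length = m.length := by
    have := hperm.length_eq
    simpa using this
  have hsum : B.sum + S.sum = m.sum := by
    have := hperm.sum_eq
    simpa using this
  obtain ⟨u, hu, husum, huineq⟩ := key B S hB hS (by omega) s (by omega)
  obtain ⟨u', hu'perm, hu'⟩ := forall₂_of_perm hperm.symm hu
  exact ⟨u', hu', by rw [hu'perm.sum_eq, husum], by rw [(hu'perm.map (fun x => x.choose 2)).sum_eq]; exact huineq⟩

lemma numFin {d : ℕ} (f : Fin d → ℕ) (hbal : 3 * d ≤ ∑ i, f i) (s : ℕ) (hs : s ≤ ∑ i, f i) :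
    ∃ w : Fin d → ℕ, (∀ i, w i ≤ f i) ∧ ∑ i, w i = s ∧ s ≤ (∑ i, (w i).choose 2) + 1 := by
  obtain ⟨u, hu, husum, huineq⟩ := num (List.ofFn f) (by simp [List.sum_ofFn]; omega)
    s (by rw [List.sum_ofFn]; exact hs)
  have hlen : u.length = d := by simpa using hu.length_eq
  set w : Fin d → ℕ := fun i => u.get (Fin.cast hlen.symm i) with hw
  have hofn : List.ofFn w = u := by
    apply List.ext_getElem (by simp [hlen])
    intro i h1 h2
    simp [hw, List.getElem_ofFn]
  refine ⟨w, ?_, ?_, ?_⟩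
  · intro i
    rw [List.forall₂_iff_get] at hu
    have := hu.2 i (by omega) (by simp)
    simpa [hw, List.get_ofFn] using this
  · rw [← List.sum_ofFn, hofn, husum]
  · have : (∑ i, (w i).choose 2) = (u.map (fun x => x.choose 2)).sum := by
      rw [← hofn, List.map_ofFn, List.sum_ofFn]; rfl
    omega


lemma prod_Icc_succ_fact (N : ℕ) : (∏ i ∈ Finset.Icc 1 N, (i + 1)) = (N + 1).factorial := by
  induction N with
  | zero => simp
  | succ N ih =>
    rw [Finset.prod_Icc_succ_top (by omega), ih, Nat.factorial_succ (N+1)]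
    ring

end TaylorAux

open SC in
/-- For a completely balanced complex of dimension `d-1` on `n ≥ 3d` vertices,
`m̃_r(K) ≤ r + 1` for `1 ≤ r ≤ n - d`; consequently the conjectured Taylor lower bound is
at most `n - d + 1`. -/
theorem taylorLBval_le_of_balanced {α : Type*} [DecidableEq α] (K : SC α) (d : ℕ)
    (hd : 1 ≤ d) (hdim : K.dimP1 = d)
    (col : α → Fin d)
    (hcol : ∀ F ∈ K.faces, ∀ i, (F.filter (fun v => col v = i)).card ≤ 1)
    (hn : 3 * d ≤ K.verts.card) :
    (∀ r, 1 ≤ r → r ≤ K.verts.card - d → K.mT r ≤ r + 1) ∧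
      K.taylorLBval ≤ ((K.verts.card - d + 1 : ℕ) : ℚ) := by
  classical
  set n := K.verts.card with hndef
  -- the color classes
  set Cl : Fin d → Finset α := fun i => K.verts.filter (fun v => col v = i) with hCl
  have hV : n = ∑ i : Fin d, (Cl i).card :=
    Finset.card_eq_sum_card_fiberwise (fun x _ => Finset.mem_univ (col x))
  have hempty : (∅ : Finset α) ∈ K.faces := by
    have hpos : 0 < n := by omega
    obtain ⟨v₀, hv₀⟩ := Finset.card_pos.1 hpos
    exact K.down_closed {v₀} (K.singleton_mem v₀ hv₀) ∅ (Finset.empty_subset _)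
  have part1 : ∀ r, 1 ≤ r → r ≤ n - d → K.mT r ≤ r + 1 := by
    intro r hr1 hr2
    obtain ⟨w, hw, hwsum, hwineq⟩ := TaylorAux.numFin (fun i => (Cl i).card) (show 3 * d ≤ ∑ i, (Cl i).card by omega) (r + 1)
      (show r + 1 ≤ ∑ i, (Cl i).card by omega)
    have hex : ∀ i, ∃ t ⊆ Cl i, t.card = w i := fun i => Finset.exists_subset_card_eq (hw i)
    choose U hU hUcard using hex
    set E : Finset (Finset α) := Finset.univ.biUnion (fun i => (U i).powersetCard 2) with hE
    have hcolU : ∀ i, ∀ v ∈ U i, col v = i := by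
      intro i v hv
      have := hU i hv
      rw [hCl, Finset.mem_filter] at this
      exact this.2
    have hdisj : ∀ i ∈ (Finset.univ : Finset (Fin d)), ∀ j ∈ Finset.univ, i ≠ j →
        Disjoint ((U i).powersetCard 2) ((U j).powersetCard 2) := by
      intro i _ j _ hij
      rw [Finset.disjoint_left]
      intro e hei hej
      rw [Finset.mem_powersetCard] at hei hej
      obtain ⟨v, hv⟩ := Finset.card_pos.1 (by omega : 0 < e.card)
      exact hij ((hcolU i v (hei.1 hv)).symm.trans (hcolU j v (hej.1 hv)))
    have hEcard : E.card = ∑ i, (w i).choose 2 := by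
      rw [hE, Finset.card_biUnion hdisj]
      exact Finset.sum_congr rfl fun i _ => by rw [Finset.card_powersetCard, hUcard]
    obtain ⟨T, hTE, hTcard⟩ := Finset.exists_subset_card_eq (show r ≤ E.card by omega)
    have hTmnf : T ⊆ K.minNonFaces := by
      intro e he
      obtain ⟨i, _, hei⟩ := Finset.mem_biUnion.1 (hTE he)
      rw [Finset.mem_powersetCard] at hei
      obtain ⟨heU, hecard⟩ := hei
      have heverts : e ⊆ K.verts := fun v hv => Finset.mem_filter.1 (hU i (heU hv)) |>.1
      rw [minNonFaces, Finset.mem_filter, Finset.mem_powerset]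
      refine ⟨heverts, ?_, ?_⟩
      · intro hface
        have h1 := hcol e hface i
        rw [Finset.filter_true_of_mem (fun v hv => hcolU i v (heU hv))] at h1
        omega
      · intro G hG hne
        rw [Finset.mem_powerset] at hG
        have hlt : G.card < 2 := by
          rw [← hecard]
          exact Finset.card_lt_card (Finset.ssubset_iff_subset_ne.2 ⟨hG, hne⟩)
        interval_cases h : G.card
        · rw [Finset.card_eq_zero.1 h]; exact hempty
        · obtain ⟨v, rfl⟩ := Finset.card_eq_one.1 h
          exact K.singleton_mem v (heverts (hG (Finset.mem_singleton_self v)))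
    have hsup : T.sup id ≤ Finset.univ.biUnion U := by
      apply Finset.sup_le
      intro e he
      obtain ⟨i, _, hei⟩ := Finset.mem_biUnion.1 (hTE he)
      rw [Finset.mem_powersetCard] at hei
      exact le_trans hei.1 (Finset.subset_biUnion_of_mem U (Finset.mem_univ i))
    have hsupcard : (T.sup id).card ≤ r + 1 := by
      calc (T.sup id).card ≤ (Finset.univ.biUnion U).card := Finset.card_le_card (Finset.le_iff_subset.1 hsup)
        _ ≤ ∑ i, (U i).card := Finset.card_biUnion_le
        _ = r + 1 := by rw [← hwsum]; exact Finset.sum_congr rfl fun i _ => hUcard i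
    exact le_trans (Nat.sInf_le ⟨T, hTmnf, hTcard, rfl⟩) hsupcard
  refine ⟨part1, ?_⟩
  set N := n - d with hN
  have hNdim : K.verts.card - K.dimP1 = N := by rw [hdim]
  rw [taylorLBval, hNdim]
  have hfactpos : (0 : ℚ) < (N.factorial : ℚ) := by exact_mod_cast N.factorial_pos
  have hprod : (∏ i ∈ Finset.Icc 1 N, (K.mT i : ℚ)) ≤ ∏ i ∈ Finset.Icc 1 N, ((i + 1 : ℕ) : ℚ) := by
    apply Finset.prod_le_prod
    · intro i _; positivity
    · intro i hi
      rw [Finset.mem_Icc] at hi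
      exact_mod_cast part1 i hi.1 hi.2
  calc (∏ i ∈ Finset.Icc 1 N, (K.mT i : ℚ)) / (N.factorial : ℚ)
      ≤ (∏ i ∈ Finset.Icc 1 N, ((i + 1 : ℕ) : ℚ)) / (N.factorial : ℚ) := by
        exact div_le_div_of_nonneg_right hprod hfactpos.le |>.trans_eq rfl
    _ = (((N + 1).factorial : ℕ) : ℚ) / (N.factorial : ℚ) := by
        rw [← Nat.cast_prod, TaylorAux.prod_Icc_succ_fact]
    _ = ((N + 1 : ℕ) : ℚ) := by
        rw [Nat.factorial_succ]
        push_cast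
        field_simp
end

section
/- Let K be a simplicial complex of dimension d−1 (d ≥ 1) with n vertices, where n ≥ 9d + 1. Then K satisfies the Taylor upper bound strictly: f_{d−1}(K) < (∏_{i=1}^{n−d} M̃_i(K))/(n−d)!. -/
open Finset

section TaylorAux


/-- Product of `min (2i) N` for `i = 1..N`. -/
def Pfun (N : ℕ) : ℕ := ∏ i ∈ Finset.Icc 1 N, min (2*i) N

lemma bern1 (a b k : ℕ) : a^(k+1) + (k+1)*b*a^k ≤ (a+b)^(k+1) := by
  induction k with
  | zero => simp [pow_succ]
  | succ k ih =>
    have h : (a+b)^(k+2) = (a+b)^(k+1) * (a+b) := by ring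
    have expand : (a^(k+1) + (k+1)*b*a^k) * (a+b)
        = (a^(k+2) + (k+2)*b*a^(k+1)) + (k+1)*b^2*a^k := by ring
    calc a^(k+2) + (k+2)*b*a^(k+1)
        ≤ (a^(k+1) + (k+1)*b*a^k) * (a+b) := by rw [expand]; exact Nat.le_add_right _ _
      _ ≤ (a+b)^(k+1) * (a+b) := Nat.mul_le_mul_right _ ih
      _ = (a+b)^(k+2) := by ring

lemma bern4 (a b e : ℕ) :
    a^(4*e+1) * (24*a^4 + 24*(4*e+5)*b*a^3 + 12*(4*e+5)*(4*e+4)*b^2*a^2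
      + 4*(4*e+5)*(4*e+4)*(4*e+3)*b^3*a + (4*e+5)*(4*e+4)*(4*e+3)*(4*e+2)*b^4)
    ≤ 24 * (a+b)^(4*e+5) := by
  have hn : (b + a)^(4*e+5) = ∑ k ∈ Finset.range (4*e+5+1), b^k * a^(4*e+5-k) * (4*e+5).choose k :=
    add_pow b a (4*e+5)
  have hsub : Finset.range 5 ⊆ Finset.range (4*e+5+1) := by
    apply Finset.range_subset_range.2; omega
  have hpart : ∑ k ∈ Finset.range 5, b^k * a^(4*e+5-k) * (4*e+5).choose k ≤ (b+a)^(4*e+5) := by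
    rw [hn]
    exact Finset.sum_le_sum_of_subset hsub
  have e1 : (4*e+5).choose 1 = 4*e+5 := Nat.choose_one_right _
  have e2 : (4*e+5).choose 2 * 2 = (4*e+5)*(4*e+4) := by
    have h := Nat.choose_succ_right_eq (4*e+5) 1
    rw [e1, show 4*e+5-1 = 4*e+4 by omega] at h
    exact h
  have e3 : (4*e+5).choose 3 * 6 = (4*e+5)*(4*e+4)*(4*e+3) := by
    have h := Nat.choose_succ_right_eq (4*e+5) 2
    rw [show 4*e+5-2 = 4*e+3 by omega] at h
    calc (4*e+5).choose 3 * 6 = ((4*e+5).choose 3 * 3) * 2 := by ring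
      _ = ((4*e+5).choose 2 * (4*e+3)) * 2 := by rw [h]
      _ = ((4*e+5).choose 2 * 2) * (4*e+3) := by ring
      _ = (4*e+5)*(4*e+4)*(4*e+3) := by rw [e2]
  have e4 : (4*e+5).choose 4 * 24 = (4*e+5)*(4*e+4)*(4*e+3)*(4*e+2) := by
    have h := Nat.choose_succ_right_eq (4*e+5) 3
    rw [show 4*e+5-3 = 4*e+2 by omega] at h
    calc (4*e+5).choose 4 * 24 = ((4*e+5).choose 4 * 4) * 6 := by ring
      _ = ((4*e+5).choose 3 * (4*e+2)) * 6 := by rw [h]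
      _ = ((4*e+5).choose 3 * 6) * (4*e+2) := by ring
      _ = (4*e+5)*(4*e+4)*(4*e+3)*(4*e+2) := by rw [e3]
  have key : a^(4*e+1) * (24*a^4 + 24*(4*e+5)*b*a^3 + 12*(4*e+5)*(4*e+4)*b^2*a^2
      + 4*(4*e+5)*(4*e+4)*(4*e+3)*b^3*a + (4*e+5)*(4*e+4)*(4*e+3)*(4*e+2)*b^4)
      = 24 * ∑ k ∈ Finset.range 5, b^k * a^(4*e+5-k) * (4*e+5).choose k := by
    rw [Finset.sum_range_succ, Finset.sum_range_succ, Finset.sum_range_succ,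
      Finset.sum_range_succ, Finset.sum_range_succ, Finset.sum_range_zero]
    rw [show 4*e+5-0 = 4*e+5 by omega, show 4*e+5-1 = 4*e+4 by omega,
      show 4*e+5-2 = 4*e+3 by omega, show 4*e+5-3 = 4*e+2 by omega,
      show 4*e+5-4 = 4*e+1 by omega, Nat.choose_zero_right, e1]
    calc a^(4*e+1) * (24*a^4 + 24*(4*e+5)*b*a^3 + 12*(4*e+5)*(4*e+4)*b^2*a^2
        + 4*(4*e+5)*(4*e+4)*(4*e+3)*b^3*a + (4*e+5)*(4*e+4)*(4*e+3)*(4*e+2)*b^4)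
        = 24*(a^(4*e+5)) + 24*(b*a^(4*e+4)*(4*e+5))
          + 12*b^2*a^(4*e+3)*((4*e+5)*(4*e+4))
          + 4*b^3*a^(4*e+2)*((4*e+5)*(4*e+4)*(4*e+3))
          + b^4*a^(4*e+1)*((4*e+5)*(4*e+4)*(4*e+3)*(4*e+2)) := by ring
      _ = 24*(a^(4*e+5)) + 24*(b*a^(4*e+4)*(4*e+5))
          + 12*b^2*a^(4*e+3)*((4*e+5).choose 2 * 2)
          + 4*b^3*a^(4*e+2)*((4*e+5).choose 3 * 6)
          + b^4*a^(4*e+1)*((4*e+5).choose 4 * 24) := by rw [e2, e3, e4]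
      _ = 24 * (0 + b^0*a^(4*e+5)*1 + b^1*a^(4*e+4)*(4*e+5) + b^2*a^(4*e+3)*(4*e+5).choose 2
          + b^3*a^(4*e+2)*(4*e+5).choose 3 + b^4*a^(4*e+1)*(4*e+5).choose 4) := by ring
  calc a^(4*e+1) * (24*a^4 + 24*(4*e+5)*b*a^3 + 12*(4*e+5)*(4*e+4)*b^2*a^2
      + 4*(4*e+5)*(4*e+4)*(4*e+3)*b^3*a + (4*e+5)*(4*e+4)*(4*e+3)*(4*e+2)*b^4)
      = 24 * ∑ k ∈ Finset.range 5, b^k * a^(4*e+5-k) * (4*e+5).choose k := key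
    _ ≤ 24 * (b+a)^(4*e+5) := Nat.mul_le_mul_left _ hpart
    _ = 24 * (a+b)^(4*e+5) := by rw [add_comm b a]

/-- Explicit polynomial certificate inequality. -/
lemma polyIneq (e : ℕ) :
    24 * ((9*e+11)*(9*e+12)*(9*e+13)*(9*e+14)*(9*e+15)*(9*e+16)*(9*e+17)*(9*e+18)*(9*e+19))
      * (8*e+9)^4
    ≤ 16*(e+2)*(4*e+5)*(4*e+6)*(4*e+7)*(4*e+8)*(8*e+17)^4 *
      (24*(8*e+9)^4 + 24*(4*e+5)*8*(8*e+9)^3 + 12*(4*e+5)*(4*e+4)*8^2*(8*e+9)^2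
        + 4*(4*e+5)*(4*e+4)*(4*e+3)*8^3*(8*e+9) + (4*e+5)*(4*e+4)*(4*e+3)*(4*e+2)*8^4) := by
  have cert : 24 * ((9*e+11)*(9*e+12)*(9*e+13)*(9*e+14)*(9*e+15)*(9*e+16)*(9*e+17)*(9*e+18)*(9*e+19))
      * (8*e+9)^4 + (11329879550330880 + 98253250347643776*e^1 + 389027728619641760*e^2 + 930506101991193984*e^3 + 1498966624001162200*e^4 + 1716029971671534056*e^5 + 1435063811519744304*e^6 + 886687126113505264*e^7 + 404246403563779672*e^8 + 134072442255367464*e^9 + 31366095065522432*e^10 + 4884522063379456*e^11 + 451412444626944*e^12 + 18539865079808*e^13)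
    = 16*(e+2)*(4*e+5)*(4*e+6)*(4*e+7)*(4*e+8)*(8*e+17)^4 *
      (24*(8*e+9)^4 + 24*(4*e+5)*8*(8*e+9)^3 + 12*(4*e+5)*(4*e+4)*8^2*(8*e+9)^2
        + 4*(4*e+5)*(4*e+4)*(4*e+3)*8^3*(8*e+9) + (4*e+5)*(4*e+4)*(4*e+3)*(4*e+2)*8^4) := by ring
  exact Nat.le.intro cert

lemma keyIneq (e : ℕ) :
    ((9*e+11)*(9*e+12)*(9*e+13)*(9*e+14)*(9*e+15)*(9*e+16)*(9*e+17)*(9*e+18)*(9*e+19))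
      * (8*e+9)^(4*e+5)
    ≤ (e+2)*16*(4*e+5)*(4*e+6)*(4*e+7)*(4*e+8)*(8*e+17)^(4*e+9) := by
  set L := (9*e+11)*(9*e+12)*(9*e+13)*(9*e+14)*(9*e+15)*(9*e+16)*(9*e+17)*(9*e+18)*(9*e+19) with hL
  have h24 : 24 * (L * (8*e+9)^(4*e+5))
      ≤ 24 * ((e+2)*16*(4*e+5)*(4*e+6)*(4*e+7)*(4*e+8)*(8*e+17)^(4*e+9)) := by
    have hb4 := bern4 (8*e+9) 8 e
    rw [show (8*e+9) + 8 = 8*e+17 by omega] at hb4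
    set V := 24*(8*e+9)^4 + 24*(4*e+5)*8*(8*e+9)^3 + 12*(4*e+5)*(4*e+4)*8^2*(8*e+9)^2
        + 4*(4*e+5)*(4*e+4)*(4*e+3)*8^3*(8*e+9) + (4*e+5)*(4*e+4)*(4*e+3)*(4*e+2)*8^4 with hV
    calc 24 * (L * (8*e+9)^(4*e+5))
        = (24 * L * (8*e+9)^4) * (8*e+9)^(4*e+1) := by
          rw [show 4*e+5 = 4 + (4*e+1) by omega, pow_add]; ring
      _ ≤ (16*(e+2)*(4*e+5)*(4*e+6)*(4*e+7)*(4*e+8)*(8*e+17)^4 * V) * (8*e+9)^(4*e+1) :=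
          Nat.mul_le_mul_right _ (polyIneq e)
      _ = 16*(e+2)*(4*e+5)*(4*e+6)*(4*e+7)*(4*e+8)*(8*e+17)^4 * ((8*e+9)^(4*e+1) * V) := by ring
      _ ≤ 16*(e+2)*(4*e+5)*(4*e+6)*(4*e+7)*(4*e+8)*(8*e+17)^4 * (24 * (8*e+17)^(4*e+5)) :=
          Nat.mul_le_mul_left _ hb4
      _ = 24 * ((e+2)*16*(4*e+5)*(4*e+6)*(4*e+7)*(4*e+8)*((8*e+17)^4 * (8*e+17)^(4*e+5))) := by
          ring
      _ = 24 * ((e+2)*16*(4*e+5)*(4*e+6)*(4*e+7)*(4*e+8)*(8*e+17)^(4*e+9)) := by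
          rw [← pow_add]; norm_num; ring_nf
  exact Nat.le_of_mul_le_mul_left h24 (by norm_num)

lemma baseIneq : ∀ d : ℕ, 1 ≤ d →
    Nat.factorial (9*d+1) < Nat.factorial d * (16^d * Nat.factorial (4*d) * (8*d+1)^(4*d+1)) := by
  intro d hd
  induction d, hd using Nat.le_induction with
  | base => norm_num [Nat.factorial]
  | succ d hd ih =>
    have hfac9 : Nat.factorial (9*(d+1)+1)
        = ((9*d+2)*(9*d+3)*(9*d+4)*(9*d+5)*(9*d+6)*(9*d+7)*(9*d+8)*(9*d+9)*(9*d+10))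
          * Nat.factorial (9*d+1) := by
      rw [show 9*(d+1)+1 = (9*d+9)+1 by ring, Nat.factorial_succ,
        show 9*d+9 = (9*d+8)+1 by ring, Nat.factorial_succ,
        show 9*d+8 = (9*d+7)+1 by ring, Nat.factorial_succ,
        show 9*d+7 = (9*d+6)+1 by ring, Nat.factorial_succ,
        show 9*d+6 = (9*d+5)+1 by ring, Nat.factorial_succ,
        show 9*d+5 = (9*d+4)+1 by ring, Nat.factorial_succ,
        show 9*d+4 = (9*d+3)+1 by ring, Nat.factorial_succ,
        show 9*d+3 = (9*d+2)+1 by ring, Nat.factorial_succ,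
        show 9*d+2 = (9*d+1)+1 by ring, Nat.factorial_succ]
      ring
    have hfac4 : Nat.factorial (4*(d+1))
        = ((4*d+1)*(4*d+2)*(4*d+3)*(4*d+4)) * Nat.factorial (4*d) := by
      rw [show 4*(d+1) = (4*d+3)+1 by ring, Nat.factorial_succ,
        show 4*d+3 = (4*d+2)+1 by ring, Nat.factorial_succ,
        show 4*d+2 = (4*d+1)+1 by ring, Nat.factorial_succ,
        show 4*d+1 = (4*d)+1 by ring, Nat.factorial_succ]
      ring
    have hkey : ((9*d+2)*(9*d+3)*(9*d+4)*(9*d+5)*(9*d+6)*(9*d+7)*(9*d+8)*(9*d+9)*(9*d+10))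
        * (8*d+1)^(4*d+1)
        ≤ (d+1)*16*(4*d+1)*(4*d+2)*(4*d+3)*(4*d+4)*(8*(d+1)+1)^(4*(d+1)+1) := by
      obtain ⟨e, rfl⟩ : ∃ e, d = e + 1 := ⟨d - 1, by omega⟩
      have := keyIneq e
      calc ((9*(e+1)+2)*(9*(e+1)+3)*(9*(e+1)+4)*(9*(e+1)+5)*(9*(e+1)+6)*(9*(e+1)+7)
            *(9*(e+1)+8)*(9*(e+1)+9)*(9*(e+1)+10)) * (8*(e+1)+1)^(4*(e+1)+1)
          = ((9*e+11)*(9*e+12)*(9*e+13)*(9*e+14)*(9*e+15)*(9*e+16)*(9*e+17)*(9*e+18)*(9*e+19))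
            * (8*e+9)^(4*e+5) := by ring_nf
        _ ≤ (e+2)*16*(4*e+5)*(4*e+6)*(4*e+7)*(4*e+8)*(8*e+17)^(4*e+9) := keyIneq e
        _ = ((e+1)+1)*16*(4*(e+1)+1)*(4*(e+1)+2)*(4*(e+1)+3)*(4*(e+1)+4)
            *(8*((e+1)+1)+1)^(4*((e+1)+1)+1) := by ring_nf
    set P9 := (9*d+2)*(9*d+3)*(9*d+4)*(9*d+5)*(9*d+6)*(9*d+7)*(9*d+8)*(9*d+9)*(9*d+10) with hP9
    have hP9pos : 0 < P9 := by positivity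
    calc Nat.factorial (9*(d+1)+1) = P9 * Nat.factorial (9*d+1) := hfac9
      _ < P9 * (Nat.factorial d * (16^d * Nat.factorial (4*d) * (8*d+1)^(4*d+1))) :=
          mul_lt_mul_of_pos_left ih hP9pos
      _ = (Nat.factorial d * (16^d * Nat.factorial (4*d))) * (P9 * (8*d+1)^(4*d+1)) := by ring
      _ ≤ (Nat.factorial d * (16^d * Nat.factorial (4*d)))
          * ((d+1)*16*(4*d+1)*(4*d+2)*(4*d+3)*(4*d+4)*(8*(d+1)+1)^(4*(d+1)+1)) :=
          Nat.mul_le_mul_left _ hkey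
      _ = Nat.factorial (d+1) * (16^(d+1) * Nat.factorial (4*(d+1)) * (8*(d+1)+1)^(4*(d+1)+1)) := by
          rw [hfac4, Nat.factorial_succ, pow_succ]; ring


lemma prod_Ico_two_mul (m : ℕ) : (∏ i ∈ Finset.Ico 1 (m+1), (2*i)) = 2^m * Nat.factorial m := by
  rw [Finset.prod_mul_distrib, Finset.prod_const, Nat.card_Ico,
    Finset.prod_Ico_id_eq_factorial]
  norm_num

lemma Pval (d : ℕ) : Pfun (8*d+1) = 16^d * Nat.factorial (4*d) * (8*d+1)^(4*d+1) := by
  unfold Pfun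
  rw [← Finset.Ico_add_one_right_eq_Icc]
  have hsplit : (∏ i ∈ Finset.Ico 1 (4*d+1), min (2*i) (8*d+1))
      * (∏ i ∈ Finset.Ico (4*d+1) (8*d+1+1), min (2*i) (8*d+1))
      = ∏ i ∈ Finset.Ico 1 (8*d+1+1), min (2*i) (8*d+1) :=
    Finset.prod_Ico_consecutive _ (by omega) (by omega)
  rw [← hsplit]
  have h1 : (∏ i ∈ Finset.Ico 1 (4*d+1), min (2*i) (8*d+1)) = 2^(4*d) * Nat.factorial (4*d) := by
    rw [← prod_Ico_two_mul]
    apply Finset.prod_congr rfl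
    intro i hi
    simp only [Finset.mem_Ico] at hi
    exact min_eq_left (by omega)
  have h2 : (∏ i ∈ Finset.Ico (4*d+1) (8*d+1+1), min (2*i) (8*d+1)) = (8*d+1)^(4*d+1) := by
    rw [Finset.prod_congr rfl (g := fun _ => 8*d+1) (fun i hi => by
      simp only [Finset.mem_Ico] at hi
      exact min_eq_right (by omega))]
    rw [Finset.prod_const, Nat.card_Ico]
    congr 1
    omega
  rw [h1, h2, show (16:ℕ)^d = 2^(4*d) by rw [show (16:ℕ) = 2^4 by norm_num, ← pow_mul]]

lemma Pstep (N d : ℕ) (h : 2*d+2 ≤ N) : (N+d+1) * Pfun N ≤ Pfun (N+1) := by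
  unfold Pfun
  rw [← Finset.Ico_add_one_right_eq_Icc, ← Finset.Ico_add_one_right_eq_Icc]
  have hsplitN : (∏ i ∈ Finset.Ico 1 (N-d+1), min (2*i) N)
      * (∏ i ∈ Finset.Ico (N-d+1) (N+1), min (2*i) N)
      = ∏ i ∈ Finset.Ico 1 (N+1), min (2*i) N :=
    Finset.prod_Ico_consecutive _ (by omega) (by omega)
  have hsplitN1 : (∏ i ∈ Finset.Ico 1 (N-d+1), min (2*i) (N+1))
      * (∏ i ∈ Finset.Ico (N-d+1) (N+1+1), min (2*i) (N+1))
      = ∏ i ∈ Finset.Ico 1 (N+1+1), min (2*i) (N+1) :=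
    Finset.prod_Ico_consecutive _ (by omega) (by omega)
  have htopN : (∏ i ∈ Finset.Ico (N-d+1) (N+1), min (2*i) N) = N^d := by
    rw [Finset.prod_congr rfl (g := fun _ => N) (fun i hi => by
      simp only [Finset.mem_Ico] at hi
      exact min_eq_right (by omega))]
    rw [Finset.prod_const, Nat.card_Ico]
    congr 1; omega
  have htopN1 : (∏ i ∈ Finset.Ico (N-d+1) (N+1+1), min (2*i) (N+1)) = (N+1)^(d+1) := by
    rw [Finset.prod_congr rfl (g := fun _ => N+1) (fun i hi => by
      simp only [Finset.mem_Ico] at hi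
      exact min_eq_right (by omega))]
    rw [Finset.prod_const, Nat.card_Ico]
    congr 1; omega
  rw [← hsplitN, ← hsplitN1, htopN, htopN1]
  set Q := ∏ i ∈ Finset.Ico 1 (N-d+1), min (2*i) N with hQ
  set Q' := ∏ i ∈ Finset.Ico 1 (N-d+1), min (2*i) (N+1) with hQ'
  have hQQ' : Q ≤ Q' := Finset.prod_le_prod' (fun i _ =>
    le_min (min_le_left _ _) ((min_le_right _ _).trans (Nat.le_succ N)))
  have hbern : (N+d+1) * N^d ≤ (N+1)^(d+1) := by
    have := bern1 N 1 d
    calc (N+d+1) * N^d = N^(d+1) + (d+1)*1*N^d := by ring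
      _ ≤ (N+1)^(d+1) := this
  calc (N+d+1) * (Q * N^d) = Q * ((N+d+1) * N^d) := by ring
    _ ≤ Q * (N+1)^(d+1) := Nat.mul_le_mul_left _ hbern
    _ ≤ Q' * (N+1)^(d+1) := Nat.mul_le_mul_right _ hQQ'

lemma Tmain (d : ℕ) (hd : 1 ≤ d) : ∀ n, 9*d+1 ≤ n →
    Nat.factorial n < Nat.factorial d * Pfun (n - d) := by
  intro n hn
  induction n, hn using Nat.le_induction with
  | base =>
    rw [show 9*d+1-d = 8*d+1 by omega, Pval]
    calc Nat.factorial (9*d+1) < Nat.factorial d * (16^d * Nat.factorial (4*d) * (8*d+1)^(4*d+1)) :=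
          baseIneq d hd
      _ = Nat.factorial d * (16^d * Nat.factorial (4*d) * (8*d+1)^(4*d+1)) := rfl
  | succ n hn ih =>
    have hN : n - d ≥ 8*d+1 := by omega
    have hstep := Pstep (n-d) d (by omega)
    calc Nat.factorial (n+1) = (n+1) * Nat.factorial n := Nat.factorial_succ n
      _ < (n+1) * (Nat.factorial d * Pfun (n-d)) :=
          mul_lt_mul_of_pos_left ih (by omega)
      _ = Nat.factorial d * (((n-d)+d+1) * Pfun (n-d)) := by
          rw [show n+1 = (n-d)+d+1 by omega]; ring
      _ ≤ Nat.factorial d * Pfun ((n-d)+1) := Nat.mul_le_mul_left _ hstep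
      _ = Nat.factorial d * Pfun (n+1-d) := by rw [show (n-d)+1 = n+1-d by omega]

theorem arithMain (n d : ℕ) (hd : 1 ≤ d) (hn : 9*d+1 ≤ n) :
    n.choose d * Nat.factorial (n - d) < Pfun (n - d) := by
  have hdn : d ≤ n := by omega
  have hT := Tmain d hd n hn
  rw [← Nat.choose_mul_factorial_mul_factorial hdn] at hT
  have : Nat.factorial d * (n.choose d * Nat.factorial (n-d)) < Nat.factorial d * Pfun (n-d) := by
    calc Nat.factorial d * (n.choose d * Nat.factorial (n-d))
        = n.choose d * Nat.factorial d * Nat.factorial (n-d) := by ring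
      _ < Nat.factorial d * Pfun (n-d) := hT
  exact Nat.lt_of_mul_lt_mul_left this


namespace SC

variable {α : Type*} [DecidableEq α]

lemma empty_mem_faces (K : SC α) (h : K.verts.Nonempty) : ∅ ∈ K.faces := by
  obtain ⟨v, hv⟩ := h
  exact K.down_closed _ (K.singleton_mem v hv) ∅ (Finset.empty_subset _)

lemma mnf_subset_verts (K : SC α) {M : Finset α} (hM : M ∈ K.minNonFaces) : M ⊆ K.verts := by
  simp only [minNonFaces, Finset.mem_filter, Finset.mem_powerset] at hM
  exact hM.1

lemma mnf_not_face (K : SC α) {M : Finset α} (hM : M ∈ K.minNonFaces) : M ∉ K.faces := by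
  simp only [minNonFaces, Finset.mem_filter, Finset.mem_powerset] at hM
  exact hM.2.1

lemma mnf_two_le (K : SC α) (h : K.verts.Nonempty) {M : Finset α}
    (hM : M ∈ K.minNonFaces) : 2 ≤ M.card := by
  by_contra hc
  push_neg at hc
  interval_cases hcard : M.card
  · rw [Finset.card_eq_zero] at hcard
    exact K.mnf_not_face hM (hcard ▸ K.empty_mem_faces h)
  · rw [Finset.card_eq_one] at hcard
    obtain ⟨v, rfl⟩ := hcard
    exact K.mnf_not_face hM
      (K.singleton_mem v (K.mnf_subset_verts hM (Finset.mem_singleton_self v)))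

lemma exists_mnf_subset (K : SC α) :
    ∀ (S : Finset α), S ⊆ K.verts → S ∉ K.faces → ∃ M ∈ K.minNonFaces, M ⊆ S := by
  intro S
  induction S using Finset.strongInduction with
  | _ S ih =>
    intro hS hnf
    by_cases h : ∀ G ⊆ S, G ≠ S → G ∈ K.faces
    · refine ⟨S, ?_, subset_rfl⟩
      simp only [minNonFaces, Finset.mem_filter, Finset.mem_powerset]
      exact ⟨hS, hnf, h⟩
    · push_neg at h
      obtain ⟨G, hGS, hGne, hGnf⟩ := h
      obtain ⟨M, hM, hMG⟩ :=
        ih G (Finset.ssubset_iff_subset_ne.mpr ⟨hGS, hGne⟩) (hGS.trans hS) hGnf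
      exact ⟨M, hM, hMG.trans hGS⟩

lemma face_card_le (K : SC α) {F : Finset α} (hF : F ∈ K.faces) : F.card ≤ K.dimP1 :=
  Finset.le_sup hF

lemma not_face_of_card_gt (K : SC α) {S : Finset α} (hc : K.dimP1 < S.card) : S ∉ K.faces :=
  fun hS => absurd (K.face_card_le hS) (by omega)

lemma exists_facet (K : SC α) (h : K.verts.Nonempty) :
    ∃ F ∈ K.faces, F.card = K.dimP1 := by
  obtain ⟨F, hF, hFc⟩ := Finset.exists_mem_eq_sup K.faces ⟨∅, K.empty_mem_faces h⟩ Finset.card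
  exact ⟨F, hF, hFc.symm⟩

/-- There are at least `n - d` minimal non-faces. -/
lemma card_mnf_ge (K : SC α) (d : ℕ) (hd : 1 ≤ d) (hdim : K.dimP1 = d)
    (hn : 9 * d + 1 ≤ K.verts.card) :
    K.verts.card - d ≤ K.minNonFaces.card := by
  have hvne : K.verts.Nonempty := Finset.card_pos.mp (by omega)
  obtain ⟨F, hF, hFc⟩ := K.exists_facet hvne
  rw [hdim] at hFc
  have hFv : F ⊆ K.verts := K.subset_verts F hF
  have hprop : ∀ v ∈ K.verts \ F, ∃ M, M ∈ K.minNonFaces ∧ v ∈ M ∧ M ⊆ insert v F := by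
    intro v hv
    simp only [Finset.mem_sdiff] at hv
    have hins : insert v F ⊆ K.verts := Finset.insert_subset hv.1 hFv
    have hcard : (insert v F).card = d + 1 := by
      rw [Finset.card_insert_of_notMem hv.2, hFc]
    have hnface : insert v F ∉ K.faces := K.not_face_of_card_gt (by omega)
    obtain ⟨M, hM, hMsub⟩ := K.exists_mnf_subset _ hins hnface
    refine ⟨M, hM, ?_, hMsub⟩
    by_contra hvM
    have : M ⊆ F := fun x hx => by
      rcases Finset.mem_insert.mp (hMsub hx) with h | h
      · exact absurd (h ▸ hx) hvM
      · exact h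
    exact K.mnf_not_face hM (K.down_closed F hF M this)
  classical
  have key : (K.verts \ F).card ≤ K.minNonFaces.card := by
    set f : α → Finset α := fun v =>
      if hv : ∃ M, M ∈ K.minNonFaces ∧ v ∈ M ∧ M ⊆ insert v F then hv.choose else ∅ with hf
    apply Finset.card_le_card_of_injOn f
    · intro v hv
      have h := hprop v hv
      simp only [hf, dif_pos h]
      exact h.choose_spec.1
    · intro v hv w hw hvw
      have hv' : v ∈ K.verts \ F := Finset.mem_coe.mp hv
      have hw' : w ∈ K.verts \ F := Finset.mem_coe.mp hw
      have h1 := hprop v hv'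
      have h2 := hprop w hw'
      simp only [hf, dif_pos h1, dif_pos h2] at hvw
      have hv1 : v ∈ h1.choose := h1.choose_spec.2.1
      have hw2 : h2.choose ⊆ insert w F := h2.choose_spec.2.2
      have : v ∈ insert w F := hw2 (hvw ▸ hv1)
      simp only [Finset.mem_sdiff] at hv'
      rcases Finset.mem_insert.mp this with h | h
      · exact h
      · exact absurd h hv'.2
  rw [Finset.card_sdiff_of_subset hFv, hFc] at key
  exact key

/-- Greedy choice of `i` minimal non-faces covering at least `min (2i) (n-d)` vertices. -/
lemma exists_greedy_family (K : SC α) (d : ℕ) (hd : 1 ≤ d) (hdim : K.dimP1 = d)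
    (hn : 9 * d + 1 ≤ K.verts.card) :
    ∀ i, 1 ≤ i → i ≤ K.verts.card - d →
      ∃ T ⊆ K.minNonFaces, T.card = i ∧
        min (2*i) (K.verts.card - d) ≤ (T.sup id).card := by
  have hvne : K.verts.Nonempty := Finset.card_pos.mp (by omega)
  have hmnf := K.card_mnf_ge d hd hdim hn
  set n := K.verts.card with hnn
  set N := n - d with hN
  have hsupsub : ∀ T : Finset (Finset α), T ⊆ K.minNonFaces → T.sup id ⊆ K.verts := by
    intro T hT
    exact Finset.sup_le fun M hM => K.mnf_subset_verts (hT hM)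
  intro i hi
  induction i, hi using Nat.le_induction with
  | base =>
    intro _
    obtain ⟨S, hSsub, hScard⟩ := Finset.exists_subset_card_eq (s := K.verts) (n := d+1) (by omega)
    have hSnf : S ∉ K.faces := K.not_face_of_card_gt (by omega)
    obtain ⟨M, hM, hMS⟩ := K.exists_mnf_subset S hSsub hSnf
    refine ⟨{M}, Finset.singleton_subset_iff.mpr hM, Finset.card_singleton M, ?_⟩
    rw [Finset.sup_singleton]
    have h2 := K.mnf_two_le hvne hM
    try simp only [id_eq]
    omega
  | succ i hi ih =>
    intro hiN
    obtain ⟨T, hT, hTcard, hTsup⟩ := ih (by omega)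
    have hUv : T.sup id ⊆ K.verts := hsupsub T hT
    by_cases hbig : d + 1 ≤ (K.verts \ T.sup id).card
    · obtain ⟨S, hSsub, hScard⟩ := Finset.exists_subset_card_eq (s := K.verts \ T.sup id) (n := d+1) hbig
      have hSv : S ⊆ K.verts := hSsub.trans (Finset.sdiff_subset)
      have hSnf : S ∉ K.faces := K.not_face_of_card_gt (by omega)
      obtain ⟨M, hM, hMS⟩ := K.exists_mnf_subset S hSv hSnf
      have hM2 := K.mnf_two_le hvne hM
      have hMU : Disjoint M (T.sup id) := Finset.disjoint_left.mpr fun x hx =>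
        (Finset.mem_sdiff.mp (hSsub (hMS hx))).2
      have hMnotT : M ∉ T := by
        intro hMT
        have hMsubU : M ⊆ T.sup id := Finset.le_sup (f := id) hMT
        obtain ⟨x, hx⟩ := Finset.card_pos.mp (show 0 < M.card by omega)
        exact (Finset.mem_sdiff.mp (hSsub (hMS hx))).2 (hMsubU hx)
      refine ⟨insert M T, Finset.insert_subset hM hT, ?_, ?_⟩
      · rw [Finset.card_insert_of_notMem hMnotT, hTcard]
      · rw [Finset.sup_insert]
        have hcard : (id M ⊔ T.sup id).card = M.card + (T.sup id).card := by
          rw [id_eq]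
          exact Finset.card_union_of_disjoint hMU
        omega
    · push_neg at hbig
      have hUcard : N ≤ (T.sup id).card := by
        have h1 := Finset.card_sdiff_of_subset hUv
        have h2 := Finset.card_le_card hUv
        omega
      have hex : ∃ M ∈ K.minNonFaces, M ∉ T := by
        by_contra h
        push_neg at h
        have : K.minNonFaces ⊆ T := h
        have := Finset.card_le_card this
        omega
      obtain ⟨M, hM, hMnotT⟩ := hex
      refine ⟨insert M T, Finset.insert_subset hM hT, ?_, ?_⟩
      · rw [Finset.card_insert_of_notMem hMnotT, hTcard]
      · rw [Finset.sup_insert]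
        have hsub : T.sup id ≤ id M ⊔ T.sup id := le_sup_right
        have := Finset.card_le_card hsub
        omega

lemma MT_ge (K : SC α) (d : ℕ) (hd : 1 ≤ d) (hdim : K.dimP1 = d)
    (hn : 9 * d + 1 ≤ K.verts.card) (i : ℕ) (h1 : 1 ≤ i) (h2 : i ≤ K.verts.card - d) :
    min (2*i) (K.verts.card - d) ≤ K.MT i := by
  obtain ⟨T, hT, hTcard, hTsup⟩ := K.exists_greedy_family d hd hdim hn i h1 h2
  have hmem : (T.sup id).card ∈ {m | ∃ T ⊆ K.minNonFaces, T.card = i ∧ (T.sup id).card = m} :=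
    ⟨T, hT, hTcard, rfl⟩
  have hbdd : BddAbove {m | ∃ T ⊆ K.minNonFaces, T.card = i ∧ (T.sup id).card = m} := by
    refine ⟨K.verts.card, fun m hm => ?_⟩
    obtain ⟨T', hT', _, hc⟩ := hm
    rw [← hc]
    exact Finset.card_le_card (Finset.sup_le fun M hM => K.mnf_subset_verts (hT' hM))
  exact hTsup.trans (le_csSup hbdd hmem)

lemma fCard_le_choose (K : SC α) (d : ℕ) : K.fCard d ≤ K.verts.card.choose d := by
  unfold fCard
  rw [← Finset.card_powersetCard d K.verts]
  apply Finset.card_le_card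
  intro F hF
  simp only [Finset.mem_filter] at hF
  rw [Finset.mem_powersetCard]
  exact ⟨K.subset_verts F hF.1, hF.2⟩

end SC

end TaylorAux

open SC in
/-- A simplicial complex of dimension `d-1` on at least `9d + 1` vertices satisfies the
Taylor upper bound strictly. -/
theorem taylorUB_strict_of_large {α : Type*} [DecidableEq α] (K : SC α) (d : ℕ)
    (hd : 1 ≤ d) (hdim : K.dimP1 = d) (hn : 9 * d + 1 ≤ K.verts.card) :
    (K.fCard d : ℚ) < K.taylorUBval := by
  have hchain : K.fCard d * Nat.factorial (K.verts.card - d)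
      < ∏ i ∈ Finset.Icc 1 (K.verts.card - d), K.MT i := by
    calc K.fCard d * Nat.factorial (K.verts.card - d)
        ≤ (K.verts.card.choose d) * Nat.factorial (K.verts.card - d) :=
          Nat.mul_le_mul_right _ (K.fCard_le_choose d)
      _ < Pfun (K.verts.card - d) := arithMain _ d hd hn
      _ ≤ ∏ i ∈ Finset.Icc 1 (K.verts.card - d), K.MT i := by
          unfold Pfun
          apply Finset.prod_le_prod'
          intro i hi
          rw [Finset.mem_Icc] at hi
          exact K.MT_ge d hd hdim hn i hi.1 hi.2
  unfold SC.taylorUBval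
  rw [hdim, lt_div_iff₀ (by exact_mod_cast Nat.factorial_pos (K.verts.card - d))]
  exact_mod_cast hchain
end

section
/- Every flag simplicial complex satisfies the Taylor upper bound: if K is a flag complex of dimension d−1 with n vertices, then f_{d−1}(K) ≤ (∏_{i=1}^{n−d} M̃_i(K))/(n−d)!. -/
open Finset

section TaylorAux

variable {α : Type*} [DecidableEq α]

/-- Size-`d` independent sets of the "graph" with vertex set `V` and edge set `E`. -/
def indSets (V : Finset α) (E : Finset (Finset α)) (d : ℕ) : Finset (Finset α) :=
  V.powerset.filter (fun S => S.card = d ∧ ∀ e ∈ E, ¬ e ⊆ S)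

/-- Maximal number of vertices covered by `i` edges of `E`. -/
noncomputable def MTg (E : Finset (Finset α)) (i : ℕ) : ℕ :=
  sSup {n | ∃ T ⊆ E, T.card = i ∧ (T.sup id).card = n}

lemma mem_indSets {V : Finset α} {E : Finset (Finset α)} {d : ℕ} {S : Finset α} :
    S ∈ indSets V E d ↔ S ⊆ V ∧ S.card = d ∧ ∀ e ∈ E, ¬ e ⊆ S := by
  simp [indSets, and_assoc]

lemma pair_subset_iff {x y : α} {S : Finset α} :
    ({x, y} : Finset α) ⊆ S ↔ x ∈ S ∧ y ∈ S := by
  simp [insert_subset_iff]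

/-- The neighbors of `a` in the edge set `E`. -/
def nb (E : Finset (Finset α)) (a : α) : Finset α :=
  (E.filter (fun e => a ∈ e)).biUnion (fun e => e.erase a)

variable {V : Finset α} {E : Finset (Finset α)} {d : ℕ}

lemma MTg_bddAbove (hE : ∀ e ∈ E, e ⊆ V) (i : ℕ) :
    BddAbove {n | ∃ T ⊆ E, T.card = i ∧ (T.sup id).card = n} := by
  refine ⟨V.card, ?_⟩
  rintro n ⟨T, hTE, hTc, rfl⟩
  exact card_le_card (Finset.sup_le fun e he => hE e (hTE he))

lemma le_MTg (hE : ∀ e ∈ E, e ⊆ V) {i : ℕ}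
    {T : Finset (Finset α)} (hTE : T ⊆ E) (hTc : T.card = i) :
    (T.sup id).card ≤ MTg E i :=
  le_csSup (MTg_bddAbove hE i) ⟨T, hTE, hTc, rfl⟩

lemma MTg_mono {E' : Finset (Finset α)} (hE : ∀ e ∈ E, e ⊆ V)
    (hsub : E' ⊆ E) (i : ℕ) : MTg E' i ≤ MTg E i := by
  rcases Set.eq_empty_or_nonempty {n | ∃ T ⊆ E', T.card = i ∧ (T.sup id).card = n} with h | h
  · rw [MTg, h, csSup_empty]; exact Nat.zero_le _
  · exact csSup_le_csSup (MTg_bddAbove hE i) h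
      (by rintro n ⟨T, hT, h1, h2⟩; exact ⟨T, hT.trans hsub, h1, h2⟩)

lemma nb_spec (hE : ∀ e ∈ E, e ⊆ V ∧ e.card = 2) {a x : α} (hx : x ∈ nb E a) :
    ({a, x} : Finset α) ∈ E ∧ x ≠ a ∧ x ∈ V := by
  rw [nb, mem_biUnion] at hx
  obtain ⟨e, he, hxe⟩ := hx
  rw [mem_filter] at he
  have hxa : x ≠ a := (mem_erase.1 hxe).1
  have hxe' : x ∈ e := (mem_erase.1 hxe).2
  have hsub : ({a, x} : Finset α) ⊆ e := pair_subset_iff.2 ⟨he.2, hxe'⟩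
  have hcard : ({a, x} : Finset α).card = 2 := by
    rw [card_insert_of_notMem (by simp [Ne.symm hxa]), card_singleton]
  have heq : ({a, x} : Finset α) = e :=
    eq_of_subset_of_card_le hsub (by rw [hcard, (hE e he.1).2])
  rw [heq]
  exact ⟨he.1, hxa, (hE e he.1).1 hxe'⟩

lemma mem_nb {a x : α} (hax : ({a, x} : Finset α) ∈ E) (hxa : x ≠ a) : x ∈ nb E a := by
  rw [nb, mem_biUnion]
  exact ⟨{a, x}, mem_filter.2 ⟨hax, by simp⟩, mem_erase.2 ⟨hxa, by simp⟩⟩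

/-- Hall's condition for the set `J` of vertices of the maximum independent set `I` that
are avoided by some other maximum independent set. -/
lemma hall_cond (hE : ∀ e ∈ E, e ⊆ V ∧ e.card = 2)
    (hmax : ∀ S, S ⊆ V → (∀ e ∈ E, ¬ e ⊆ S) → S.card ≤ d)
    {I : Finset α} (hI : I ∈ indSets V E d)
    (J : Finset α) (hJI : J ⊆ I)
    (hJ : ∀ a ∈ J, ∃ S ∈ indSets V E d, a ∉ S) :
    ∀ S ⊆ J, S.card ≤ (S.biUnion (nb E)).card := by
  obtain ⟨hIV, hIcard, hIind⟩ := mem_indSets.1 hI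
  by_contra hcon
  push_neg at hcon
  obtain ⟨S₀, hS₀mem, hS₀min⟩ := Finset.exists_min_image
    (J.powerset.filter (fun S => (S.biUnion (nb E)).card < S.card)) card
    (by obtain ⟨S, hSJ, hS⟩ := hcon
        exact ⟨S, mem_filter.2 ⟨mem_powerset.2 hSJ, hS⟩⟩)
  rw [mem_filter, mem_powerset] at hS₀mem
  obtain ⟨hS₀J, hS₀lt⟩ := hS₀mem
  have hS₀ne : S₀.Nonempty := by
    rcases S₀.eq_empty_or_nonempty with rfl | h
    · simp at hS₀lt
    · exact h
  obtain ⟨a, haS₀⟩ := hS₀ne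
  -- Hall's theorem on S' = S₀.erase a
  have hhall : ∀ s : Finset {x // x ∈ S₀.erase a},
      s.card ≤ (s.biUnion (fun x => nb E x.1)).card := by
    intro s
    have hTJ : s.image Subtype.val ⊆ J := by
      intro x hx
      obtain ⟨y, _, rfl⟩ := mem_image.1 hx
      exact hS₀J (erase_subset a S₀ y.2)
    have hTcard : (s.image Subtype.val).card = s.card :=
      card_image_of_injective _ Subtype.val_injective
    have hTlt : (s.image Subtype.val).card < S₀.card := by
      rw [hTcard]
      calc s.card = (s.image Subtype.val).card := hTcard.symm
        _ ≤ (S₀.erase a).card := card_le_card (by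
              intro x hx
              obtain ⟨y, _, rfl⟩ := mem_image.1 hx
              exact y.2)
        _ < S₀.card := card_erase_lt_of_mem haS₀
    have hTnot : s.image Subtype.val ∉
        (J.powerset.filter (fun S => (S.biUnion (nb E)).card < S.card)) := by
      intro hmem
      exact absurd (hS₀min _ hmem) (by omega)
    have hnotlt : ¬ (((s.image Subtype.val).biUnion (nb E)).card <
        (s.image Subtype.val).card) := by
      intro h
      exact hTnot (mem_filter.2 ⟨mem_powerset.2 hTJ, h⟩)
    have hbi : s.biUnion (fun x => nb E x.1) = (s.image Subtype.val).biUnion (nb E) := by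
      ext z
      simp only [mem_biUnion, mem_image]
      constructor
      · rintro ⟨x, hx, hz⟩; exact ⟨x.1, ⟨x, hx, rfl⟩, hz⟩
      · rintro ⟨y, ⟨x, hx, rfl⟩, hz⟩; exact ⟨x, hx, hz⟩
    rw [hbi]
    omega
  obtain ⟨g, hginj, hgmem⟩ :=
    (Finset.all_card_le_biUnion_card_iff_exists_injective
      (fun x : {x // x ∈ S₀.erase a} => nb E x.1)).1 hhall
  obtain ⟨Sa, hSa, haSa⟩ := hJ a (hS₀J haS₀)
  obtain ⟨hSaV, hSacard, hSaind⟩ := mem_indSets.1 hSa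
  have hclaim : ∀ u w : α, ({u, w} : Finset α) ∈ E → u ≠ w → w ∈ S₀ →
      u ∈ S₀.biUnion (nb E) := by
    intro u w hA hne hw
    exact mem_biUnion.2 ⟨w, hw, mem_nb (by rwa [pair_comm] at hA) hne⟩
  have hI''ind : ∀ e ∈ E, ¬ e ⊆ ((Sa \ S₀.biUnion (nb E)) ∪ S₀) := by
    intro e he hecon
    obtain ⟨x, y, hxy, rfl⟩ := card_eq_two.1 (hE e he).2
    rw [pair_subset_iff] at hecon
    obtain ⟨hx, hy⟩ := hecon
    rw [mem_union] at hx hy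
    rcases hx with hx | hx <;> rcases hy with hy | hy
    · exact hSaind _ he (pair_subset_iff.2 ⟨(mem_sdiff.1 hx).1, (mem_sdiff.1 hy).1⟩)
    · exact (mem_sdiff.1 hx).2 (hclaim x y he hxy hy)
    · exact (mem_sdiff.1 hy).2 (hclaim y x (by rwa [pair_comm] at he) (Ne.symm hxy) hx)
    · exact hIind _ he (pair_subset_iff.2 ⟨hJI (hS₀J hx), hJI (hS₀J hy)⟩)
  have hI''le : ((Sa \ S₀.biUnion (nb E)) ∪ S₀).card ≤ d :=
    hmax _ (union_subset ((sdiff_subset).trans hSaV) ((hS₀J.trans hJI).trans hIV)) hI''ind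
  have f1 : ((Sa \ S₀.biUnion (nb E)) ∪ S₀).card + ((Sa \ S₀.biUnion (nb E)) ∩ S₀).card
      = (Sa \ S₀.biUnion (nb E)).card + S₀.card := card_union_add_card_inter _ _
  have f2 : (Sa \ S₀.biUnion (nb E)).card + (Sa ∩ S₀.biUnion (nb E)).card = Sa.card :=
    card_sdiff_add_card_inter _ _
  have f3 : (S₀.biUnion (nb E) \ Sa).card + (S₀.biUnion (nb E) ∩ Sa).card
      = (S₀.biUnion (nb E)).card := card_sdiff_add_card_inter _ _
  have f6 : (Sa ∩ S₀.biUnion (nb E)).card = (S₀.biUnion (nb E) ∩ Sa).card := by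
    rw [inter_comm]
  have f4 : ((Sa \ S₀.biUnion (nb E)) ∩ S₀).card ≤ (S₀ ∩ Sa).card := by
    apply card_le_card
    intro z hz
    rw [mem_inter, mem_sdiff] at hz
    exact mem_inter.2 ⟨hz.2, hz.1.1⟩
  have f5 : (S₀ ∩ Sa).card ≤ (S₀.biUnion (nb E) \ Sa).card := by
    have hmem' : ∀ s ∈ S₀ ∩ Sa, s ∈ S₀.erase a := by
      intro s hs
      rw [mem_inter] at hs
      exact mem_erase.2 ⟨fun h => haSa (h ▸ hs.2), hs.1⟩
    apply card_le_card_of_injOn (fun s => if h : s ∈ S₀.erase a then g ⟨s, h⟩ else s)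
    · intro s hs
      have hs' := hmem' s hs
      have hgs := hgmem ⟨s, hs'⟩
      rw [mem_coe, mem_inter] at hs
      simp only [dif_pos hs']
      rw [mem_coe, mem_sdiff]
      refine ⟨mem_biUnion.2 ⟨s, erase_subset a S₀ hs', hgs⟩, fun hgSa => ?_⟩
      obtain ⟨hedge, hne, _⟩ := nb_spec hE hgs
      exact hSaind _ hedge (pair_subset_iff.2 ⟨hs.2, hgSa⟩)
    · intro s1 h1 s2 h2 heq
      have h1' := hmem' s1 h1
      have h2' := hmem' s2 h2
      simp only [dif_pos h1', dif_pos h2'] at heq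
      exact congrArg Subtype.val (hginj heq)
  omega

/-- There are `|V| - d` edges covering every vertex that is avoided by some maximum
independent set. -/
lemma cover_lemma (hE : ∀ e ∈ E, e ⊆ V ∧ e.card = 2)
    (hmax : ∀ S, S ⊆ V → (∀ e ∈ E, ¬ e ⊆ S) → S.card ≤ d)
    {I : Finset α} (hI : I ∈ indSets V E d) :
    ∃ T ⊆ E, T.card = V.card - d ∧
      ∀ v ∈ V, (∃ S ∈ indSets V E d, v ∉ S) → v ∈ T.sup id := by
  classical
  obtain ⟨hIV, hIcard, hIind⟩ := mem_indSets.1 hI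
  set J := I.filter (fun a => ∃ S ∈ indSets V E d, a ∉ S) with hJdef
  have hJI : J ⊆ I := filter_subset _ _
  have hJprop : ∀ a ∈ J, ∃ S ∈ indSets V E d, a ∉ S := fun a ha => (mem_filter.1 ha).2
  have hcond := hall_cond hE hmax hI J hJI hJprop
  -- Hall's theorem on J
  have hhall : ∀ s : Finset {x // x ∈ J}, s.card ≤ (s.biUnion (fun x => nb E x.1)).card := by
    intro s
    have hbi : s.biUnion (fun x => nb E x.1) = (s.image Subtype.val).biUnion (nb E) := by
      ext z
      simp only [mem_biUnion, mem_image]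
      constructor
      · rintro ⟨x, hx, hz⟩; exact ⟨x.1, ⟨x, hx, rfl⟩, hz⟩
      · rintro ⟨y, ⟨x, hx, rfl⟩, hz⟩; exact ⟨x, hx, hz⟩
    have hTJ : s.image Subtype.val ⊆ J := by
      intro x hx
      obtain ⟨y, _, rfl⟩ := mem_image.1 hx
      exact y.2
    have := hcond _ hTJ
    rw [hbi, ← card_image_of_injective s Subtype.val_injective]
    exact this
  obtain ⟨g, hginj, hgmem⟩ :=
    (Finset.all_card_le_biUnion_card_iff_exists_injective
      (fun x : {x // x ∈ J} => nb E x.1)).1 hhall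
  -- choose for each vertex outside `I` an edge through it
  have hex : ∀ v : α, ∃ e : Finset α, v ∈ V \ I →
      e ∈ E ∧ v ∈ e ∧ e \ {v} ⊆ I ∧ ∀ (a : α) (ha : a ∈ J), g ⟨a, ha⟩ = v → a ∈ e := by
    intro v
    by_cases hvX : v ∈ V \ I
    swap
    · exact ⟨∅, fun h => absurd h hvX⟩
    obtain ⟨hvV, hvI⟩ := mem_sdiff.1 hvX
    by_cases h2 : ∃ x : {x // x ∈ J}, g x = v
    · obtain ⟨⟨b, hb⟩, hgb⟩ := h2
      have hgs := hgmem ⟨b, hb⟩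
      rw [hgb] at hgs
      obtain ⟨hedge, hne, _⟩ := nb_spec hE hgs
      refine ⟨{b, v}, fun _ => ⟨hedge, by simp, ?_, ?_⟩⟩
      · intro z hz
        rw [mem_sdiff, mem_singleton] at hz
        obtain ⟨hz1, hz2⟩ := hz
        rcases mem_insert.1 hz1 with rfl | hz1
        · exact hJI hb
        · exact absurd (mem_singleton.1 hz1) hz2
      · intro a ha hga
        have h3 : (⟨a, ha⟩ : {x // x ∈ J}) = ⟨b, hb⟩ := hginj (by rw [hga, hgb])
        have : a = b := congrArg Subtype.val h3
        simp [this]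
    · have hc : ¬ (insert v I).card ≤ d := by
        rw [card_insert_of_notMem hvI, hIcard]; omega
      have hni : ¬ (∀ e ∈ E, ¬ e ⊆ insert v I) := fun h =>
        hc (hmax _ (insert_subset hvV hIV) h)
      push_neg at hni
      obtain ⟨e, he, hesub⟩ := hni
      have hve : v ∈ e := by
        by_contra hve
        refine hIind e he fun z hz => ?_
        rcases mem_insert.1 (hesub hz) with rfl | hz'
        · exact absurd hz hve
        · exact hz'
      refine ⟨e, fun _ => ⟨he, hve, ?_, ?_⟩⟩
      · intro z hz
        rw [mem_sdiff, mem_singleton] at hz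
        rcases mem_insert.1 (hesub hz.1) with rfl | hz'
        · exact absurd rfl hz.2
        · exact hz'
      · intro a ha hga
        exact absurd ⟨⟨a, ha⟩, hga⟩ h2
  choose f hf using hex
  refine ⟨(V \ I).image f, ?_, ?_, ?_⟩
  · intro e he
    obtain ⟨v, hv, rfl⟩ := mem_image.1 he
    exact (hf v hv).1
  · rw [card_image_of_injOn, card_sdiff_of_subset hIV, hIcard]
    intro v1 h1 v2 h2 heq
    have hv1 : v1 ∈ f v1 := (hf v1 h1).2.1
    rw [heq] at hv1
    have hsub := (hf v2 h2).2.2.1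
    by_contra hne
    have : v1 ∈ f v2 \ {v2} := mem_sdiff.2 ⟨hv1, by simp [hne]⟩
    exact (mem_sdiff.1 h1).2 (hsub this)
  · intro v hvV hw
    by_cases hvI : v ∈ I
    · have hvJ : v ∈ J := mem_filter.2 ⟨hvI, hw⟩
      have hgw := hgmem ⟨v, hvJ⟩
      obtain ⟨hedge, hne, hwV⟩ := nb_spec hE hgw
      have hwI : g ⟨v, hvJ⟩ ∉ I := by
        intro hwI
        exact hIind _ hedge (pair_subset_iff.2 ⟨hvI, hwI⟩)
      have hwX : g ⟨v, hvJ⟩ ∈ V \ I := mem_sdiff.2 ⟨hwV, hwI⟩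
      have hvmem : v ∈ f (g ⟨v, hvJ⟩) := (hf _ hwX).2.2.2 v hvJ rfl
      exact mem_sup.2 ⟨f (g ⟨v, hvJ⟩), mem_image_of_mem f hwX, hvmem⟩
    · have hvX : v ∈ V \ I := mem_sdiff.2 ⟨hvV, hvI⟩
      exact mem_sup.2 ⟨f v, mem_image_of_mem f hvX, (hf v hvX).2.1⟩

/-- The main combinatorial bound: the number of maximum independent sets, times
`(|V|-d)!`, is at most the product of the maximal coverage numbers. -/
lemma graph_main (m : ℕ) : ∀ (V : Finset α) (E : Finset (Finset α)) (d : ℕ), V.card ≤ m →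
    (∀ e ∈ E, e ⊆ V ∧ e.card = 2) →
    (∀ S, S ⊆ V → (∀ e ∈ E, ¬ e ⊆ S) → S.card ≤ d) →
    (indSets V E d).card * (V.card - d).factorial ≤ ∏ i ∈ Icc 1 (V.card - d), MTg E i := by
  induction m with
  | zero =>
    intro V E d hVm hE hmax
    have hV : V.card = 0 := Nat.le_zero.1 hVm
    rw [hV]
    rw [Nat.zero_sub, Nat.factorial_zero, mul_one,
      Finset.Icc_eq_empty (by norm_num : ¬(1:ℕ) ≤ 0), prod_empty]
    by_cases hd : d = 0
    · subst hd
      apply card_le_one.2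
      intro a ha b hb
      rw [mem_indSets] at ha hb
      rw [Finset.card_eq_zero.1 ha.2.1, Finset.card_eq_zero.1 hb.2.1]
    · have hemp : indSets V E d = ∅ := by
        rw [Finset.eq_empty_iff_forall_notMem]
        intro S hS
        rw [mem_indSets] at hS
        have := card_le_card hS.1
        rw [hV, hS.2.1] at this
        omega
      rw [hemp]
      simp
  | succ m ih =>
    intro V E d hVm hE hmax
    by_cases hk : V.card ≤ d
    · have hk0 : V.card - d = 0 := by omega
      rw [hk0, Nat.factorial_zero, mul_one,
        Finset.Icc_eq_empty (by norm_num : ¬(1:ℕ) ≤ 0), prod_empty]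
      apply card_le_one.2
      intro a ha b hb
      rw [mem_indSets] at ha hb
      have ha' : a = V := eq_of_subset_of_card_le ha.1 (by omega)
      have hb' : b = V := eq_of_subset_of_card_le hb.1 (by omega)
      rw [ha', hb']
    · have hd : d < V.card := by omega
      set k := V.card - d with hkdef
      have hk1 : 1 ≤ k := by omega
      rcases (indSets V E d).eq_empty_or_nonempty with hempty | ⟨I, hI⟩
      · rw [hempty]; simp
      -- double counting pairs (v, S) with v ∉ S
      have hsum : ∑ v ∈ V, ((indSets V E d).filter (fun S => v ∉ S)).card
          = (indSets V E d).card * k := by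
        have h1 : ∀ v ∈ V, ((indSets V E d).filter (fun S => v ∉ S)).card
            = ∑ S ∈ indSets V E d, if v ∉ S then 1 else 0 := by
          intro v _
          rw [Finset.card_filter]
        rw [Finset.sum_congr rfl h1, Finset.sum_comm]
        have h2 : ∀ S ∈ indSets V E d, (∑ v ∈ V, if v ∉ S then 1 else 0) = k := by
          intro S hS
          rw [← Finset.card_filter, ← sdiff_eq_filter]
          rw [card_sdiff_of_subset (mem_indSets.1 hS).1, (mem_indSets.1 hS).2.1]
        rw [Finset.sum_congr rfl h2, Finset.sum_const, smul_eq_mul, mul_comm]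
      -- per-vertex bound, by the induction hypothesis applied to `V.erase v`
      have hver : ∀ v ∈ V, ((indSets V E d).filter (fun S => v ∉ S)).card
          * (k - 1).factorial ≤ ∏ i ∈ Icc 1 (k - 1), MTg E i := by
        intro v hv
        have herase : (indSets V E d).filter (fun S => v ∉ S)
            = indSets (V.erase v) (E.filter (fun e => e ⊆ V.erase v)) d := by
          ext S
          rw [mem_filter, mem_indSets, mem_indSets]
          constructor
          · rintro ⟨⟨hSV, hScard, hSind⟩, hvS⟩
            refine ⟨fun z hz => mem_erase.2 ⟨fun h => hvS (h ▸ hz), hSV hz⟩, hScard, ?_⟩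
            intro e he
            exact hSind e (mem_filter.1 he).1
          · rintro ⟨hSV, hScard, hSind⟩
            have hSV' : S ⊆ V := hSV.trans (erase_subset v V)
            have hvS : v ∉ S := fun h => (mem_erase.1 (hSV h)).1 rfl
            refine ⟨⟨hSV', hScard, fun e he hecon => ?_⟩, hvS⟩
            have heV : e ⊆ V.erase v := fun z hz => hSV (hecon hz)
            exact hSind e (mem_filter.2 ⟨he, heV⟩) hecon
        rw [herase]
        have hcard' : (V.erase v).card = V.card - 1 := card_erase_of_mem hv
        have hE' : ∀ e ∈ E.filter (fun e => e ⊆ V.erase v), e ⊆ V.erase v ∧ e.card = 2 := by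
          intro e he
          rw [mem_filter] at he
          exact ⟨he.2, (hE e he.1).2⟩
        have hmax' : ∀ S, S ⊆ V.erase v →
            (∀ e ∈ E.filter (fun e => e ⊆ V.erase v), ¬ e ⊆ S) → S.card ≤ d := by
          intro S hSV hSind
          apply hmax S (hSV.trans (erase_subset v V))
          intro e he hecon
          have heV : e ⊆ V.erase v := fun z hz => hSV (hecon hz)
          exact hSind e (mem_filter.2 ⟨he, heV⟩) hecon
        have hih := ih (V.erase v) (E.filter (fun e => e ⊆ V.erase v)) d (by omega) hE' hmax'
        rw [hcard'] at hih
        have hkk : V.card - 1 - d = k - 1 := by omega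
        rw [hkk] at hih
        refine hih.trans (Finset.prod_le_prod (fun _ _ => Nat.zero_le _) ?_)
        intro i _
        exact MTg_mono (fun e he => (hE e he).1) (filter_subset _ _) i
      -- the set of vertices avoided by some maximum independent set
      set A := V.filter (fun v => ∃ S ∈ indSets V E d, v ∉ S) with hAdef
      have hAcard : A.card ≤ MTg E k := by
        obtain ⟨T, hTE, hTcard, hTcover⟩ := cover_lemma hE hmax hI
        have hAsub : A ⊆ T.sup id := by
          intro v hv
          rw [hAdef, mem_filter] at hv
          exact hTcover v hv.1 hv.2
        calc A.card ≤ (T.sup id).card := card_le_card hAsub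
          _ ≤ MTg E k := le_MTg (fun e he => (hE e he).1) hTE hTcard
      have hAzero : ∀ v ∈ V, v ∉ A → ((indSets V E d).filter (fun S => v ∉ S)).card = 0 := by
        intro v hvV hvA
        rw [Finset.card_eq_zero, Finset.filter_eq_empty_iff]
        intro S hS hvS
        exact hvA (mem_filter.2 ⟨hvV, ⟨S, hS, hvS⟩⟩)
      calc (indSets V E d).card * k.factorial
          = (∑ v ∈ V, ((indSets V E d).filter (fun S => v ∉ S)).card) * (k-1).factorial := by
            rw [hsum]
            have hfac : k.factorial = k * (k-1).factorial := by
              conv_lhs => rw [show k = (k-1) + 1 by omega]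
              rw [Nat.factorial_succ]
              congr 1
              omega
            rw [hfac]
            ring
        _ = ∑ v ∈ V, ((indSets V E d).filter (fun S => v ∉ S)).card * (k-1).factorial := by
            rw [Finset.sum_mul]
        _ = ∑ v ∈ A, ((indSets V E d).filter (fun S => v ∉ S)).card * (k-1).factorial := by
            symm
            apply Finset.sum_subset (filter_subset _ _)
            intro v hvV hvA
            rw [hAzero v hvV hvA, zero_mul]
        _ ≤ ∑ v ∈ A, ∏ i ∈ Icc 1 (k - 1), MTg E i := by
            apply Finset.sum_le_sum
            intro v hv
            exact hver v (mem_filter.1 hv).1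
        _ = A.card * ∏ i ∈ Icc 1 (k - 1), MTg E i := by
            rw [Finset.sum_const, smul_eq_mul]
        _ ≤ MTg E k * ∏ i ∈ Icc 1 (k - 1), MTg E i := by
            exact Nat.mul_le_mul_right _ hAcard
        _ = ∏ i ∈ Icc 1 k, MTg E i := by
            have hsplit : k = (k - 1) + 1 := by omega
            rw [hsplit, Finset.prod_Icc_succ_top (by omega), ← hsplit, mul_comm]

/-- Any subset of the vertex set containing no minimal non-face is a face. -/
lemma SC.mem_faces_of_indep (K : SC α) {S : Finset α} (hS : S ⊆ K.verts)
    (h : ∀ e ∈ K.minNonFaces, ¬ e ⊆ S) : S ∈ K.faces := by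
  by_contra hnf
  obtain ⟨G, hGmem, hGmin⟩ := Finset.exists_min_image
    (S.powerset.filter (fun F => F ∉ K.faces)) card
    ⟨S, mem_filter.2 ⟨mem_powerset.2 Subset.rfl, hnf⟩⟩
  rw [mem_filter, mem_powerset] at hGmem
  obtain ⟨hGS, hGnf⟩ := hGmem
  refine h G ?_ hGS
  rw [SC.minNonFaces, mem_filter, mem_powerset]
  refine ⟨hGS.trans hS, hGnf, ?_⟩
  intro H hH hne
  rw [mem_powerset] at hH
  by_contra hHnf
  have hHmem : H ∈ S.powerset.filter (fun F => F ∉ K.faces) :=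
    mem_filter.2 ⟨mem_powerset.2 (hH.trans hGS), hHnf⟩
  have := hGmin H hHmem
  have hlt : H.card < G.card := card_lt_card (ssubset_of_subset_of_ne hH hne)
  omega

/-- The top-dimensional faces of a complex are exactly the "independent" sets of
size `dimP1` for the minimal non-faces. -/
lemma SC.faces_filter_eq (K : SC α) :
    K.faces.filter (fun F => F.card = K.dimP1)
      = indSets K.verts K.minNonFaces K.dimP1 := by
  ext F
  rw [mem_filter, mem_indSets]
  constructor
  · rintro ⟨hF, hcard⟩
    refine ⟨K.subset_verts F hF, hcard, ?_⟩
    intro e he hecon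
    rw [SC.minNonFaces, mem_filter] at he
    exact he.2.1 (K.down_closed F hF e hecon)
  · rintro ⟨hFV, hcard, hind⟩
    exact ⟨K.mem_faces_of_indep hFV hind, hcard⟩

end TaylorAux

open SC in
/-- Every flag simplicial complex (all minimal non-faces have two vertices) of dimension
`d-1` with `n` vertices satisfies the Taylor upper bound. -/
theorem taylorUB_of_flag {α : Type*} [DecidableEq α] (K : SC α)
    (hflag : ∀ F ∈ K.minNonFaces, F.card = 2)
    (d n : ℕ) (hdim : K.dimP1 = d) (hn : K.verts.card = n) :
    (K.fCard d : ℚ) ≤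
      (∏ i ∈ Finset.Icc 1 (n - d), (K.MT i : ℚ)) / (Nat.factorial (n - d)) := by
  subst hdim hn
  have hE : ∀ e ∈ K.minNonFaces, e ⊆ K.verts ∧ e.card = 2 := by
    intro e he
    refine ⟨?_, hflag e he⟩
    rw [SC.minNonFaces, mem_filter, mem_powerset] at he
    exact he.1
  have hmax : ∀ S, S ⊆ K.verts → (∀ e ∈ K.minNonFaces, ¬ e ⊆ S) → S.card ≤ K.dimP1 := by
    intro S hSV hind
    exact Finset.le_sup (K.mem_faces_of_indep hSV hind)
  have hMT : ∀ i, K.MT i = MTg K.minNonFaces i := fun i => rfl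
  have hmain := graph_main K.verts.card K.verts K.minNonFaces K.dimP1 le_rfl hE hmax
  have hf : K.fCard K.dimP1 = (indSets K.verts K.minNonFaces K.dimP1).card := by
    rw [SC.fCard, K.faces_filter_eq]
  rw [le_div_iff₀ (by positivity : (0:ℚ) < (Nat.factorial (K.verts.card - K.dimP1) : ℚ))]
  have key : (K.fCard K.dimP1 : ℚ) * ((K.verts.card - K.dimP1).factorial : ℚ)
      ≤ ((∏ i ∈ Icc 1 (K.verts.card - K.dimP1), K.MT i : ℕ) : ℚ) := by
    rw [← Nat.cast_mul]
    apply Nat.cast_le.2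
    rw [hf]
    calc (indSets K.verts K.minNonFaces K.dimP1).card * (K.verts.card - K.dimP1).factorial
        ≤ ∏ i ∈ Icc 1 (K.verts.card - K.dimP1), MTg K.minNonFaces i := hmain
      _ = ∏ i ∈ Icc 1 (K.verts.card - K.dimP1), K.MT i := by
          apply Finset.prod_congr rfl
          intro i _
          rw [hMT]
  exact_mod_cast key
end

section
/- Let K be a simplicial complex of dimension d−1 with n vertices such that all minimal non-faces of K have exactly two vertices, except for at most one minimal non-face, which may have any number of vertices. Then K satisfies the Taylor upper bound: f_{d−1}(K) ≤ (∏_{i=1}^{n−d} M̃_i(K))/(n−d)!. -/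
open Finset

namespace TUB
variable {α : Type*} [DecidableEq α]

/-- `C` is a transversal/cover of the edge set `E`. -/
def IsCover (E : Finset (Finset α)) (C : Finset α) : Prop := ∀ e ∈ E, (e ∩ C).Nonempty

instance (E : Finset (Finset α)) (C : Finset α) : Decidable (IsCover E C) := by
  unfold IsCover; infer_instance

def V0 (E : Finset (Finset α)) : Finset α := E.sup id

def coverSizes (E : Finset (Finset α)) : Set ℕ :=
  {k | ∃ C ⊆ V0 E, IsCover E C ∧ C.card = k}

noncomputable def tau (E : Finset (Finset α)) : ℕ := sInf (coverSizes E)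

noncomputable def minCovers (E : Finset (Finset α)) : Finset (Finset α) :=
  (V0 E).powerset.filter (fun C => IsCover E C ∧ C.card = tau E)

noncomputable def MTa (E : Finset (Finset α)) (i : ℕ) : ℕ :=
  sSup {n | ∃ T ⊆ E, T.card = i ∧ (T.sup id).card = n}

lemma mem_minCovers {E : Finset (Finset α)} {C : Finset α} :
    C ∈ minCovers E ↔ C ⊆ V0 E ∧ IsCover E C ∧ C.card = tau E := by
  simp [minCovers, mem_filter, mem_powerset, and_assoc]

lemma tau_le {E : Finset (Finset α)} {C : Finset α} (hsub : C ⊆ V0 E) (hcov : IsCover E C) :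
    tau E ≤ C.card := Nat.sInf_le ⟨C, hsub, hcov, rfl⟩

lemma minCovers_nonempty {E : Finset (Finset α)} (h : (coverSizes E).Nonempty) :
    (minCovers E).Nonempty := by
  obtain ⟨C, hs, hc, hcard⟩ := Nat.sInf_mem h
  exact ⟨C, mem_minCovers.2 ⟨hs, hc, hcard⟩⟩

lemma mem_V0 {E : Finset (Finset α)} {v : α} : v ∈ V0 E ↔ ∃ e ∈ E, v ∈ e := by
  simp [V0, Finset.mem_sup]

/-- every element of a minimum cover has a "private" edge. -/
lemma exists_private {E : Finset (Finset α)} {C : Finset α} (hC : C ∈ minCovers E)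
    {c : α} (hc : c ∈ C) : ∃ e, e ∈ E ∧ e ∩ C = {c} := by
  rw [mem_minCovers] at hC
  obtain ⟨hsub, hcov, hcard⟩ := hC
  have hcpos : 0 < C.card := card_pos.2 ⟨c, hc⟩
  have hnc : ¬ IsCover E (C.erase c) := by
    intro hcov'
    have := tau_le ((erase_subset _ _).trans hsub) hcov'
    rw [card_erase_of_mem hc] at this
    omega
  rw [IsCover] at hnc
  push_neg at hnc
  obtain ⟨e, he, hee⟩ := hnc
  refine ⟨e, he, ?_⟩
  apply Subset.antisymm
  · intro x hx
    rw [mem_inter] at hx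
    rcases eq_or_ne x c with rfl | hxc
    · simp
    · exact absurd hee (Finset.nonempty_iff_ne_empty.1 (show (e ∩ C.erase c).Nonempty from ⟨x, mem_inter.2 ⟨hx.1, mem_erase.2 ⟨hxc, hx.2⟩⟩⟩))
  · intro x hx
    rw [mem_singleton] at hx
    subst hx
    obtain ⟨y, hy⟩ := hcov e he
    rw [mem_inter] at hy
    rcases eq_or_ne y x with rfl | hyx
    · exact mem_inter.2 ⟨hy.1, hy.2⟩
    · exact absurd hee (Finset.nonempty_iff_ne_empty.1 (show (e ∩ C.erase x).Nonempty from ⟨y, mem_inter.2 ⟨hy.1, mem_erase.2 ⟨hyx, hy.2⟩⟩⟩))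


/-! ### vertex deletion -/

/-- remove vertex `v`: keep edges avoiding `v`. -/
def delV (E : Finset (Finset α)) (v : α) : Finset (Finset α) := E.filter (fun e => v ∉ e)

lemma delV_subset {E : Finset (Finset α)} {v : α} : delV E v ⊆ E := filter_subset _ _

lemma not_mem_V0_delV {E : Finset (Finset α)} {v : α} : v ∉ V0 (delV E v) := by
  rw [mem_V0]
  rintro ⟨e, he, hv⟩
  exact (mem_filter.1 he).2 hv

lemma V0_delV_subset {E : Finset (Finset α)} {v : α} : V0 (delV E v) ⊆ V0 E := by
  intro x hx
  rw [mem_V0] at hx ⊢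
  obtain ⟨e, he, hxe⟩ := hx
  exact ⟨e, delV_subset he, hxe⟩

/-- the erased cover is a cover of `delV` and lands in its vertex set. -/
lemma erase_mem_stuff {E : Finset (Finset α)} {C : Finset α} (hC : C ∈ minCovers E)
    {v : α} (hv : v ∈ C) :
    C.erase v ⊆ V0 (delV E v) ∧ IsCover (delV E v) (C.erase v) := by
  obtain ⟨hsub, hcov, hcard⟩ := mem_minCovers.1 hC
  constructor
  · intro c hc
    rw [mem_erase] at hc
    obtain ⟨e, he, hpriv⟩ := exists_private hC hc.2
    have hce : c ∈ e := by
      have : c ∈ e ∩ C := by rw [hpriv]; simp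
      exact (mem_inter.1 this).1
    have hve : v ∉ e := by
      intro hve
      have : v ∈ e ∩ C := mem_inter.2 ⟨hve, hv⟩
      rw [hpriv, mem_singleton] at this
      exact hc.1 this.symm
    exact mem_V0.2 ⟨e, mem_filter.2 ⟨he, hve⟩, hce⟩
  · intro e he
    rw [delV, mem_filter] at he
    obtain ⟨x, hx⟩ := hcov e he.1
    rw [mem_inter] at hx
    have hxv : x ≠ v := fun h => he.2 (h ▸ hx.1)
    exact ⟨x, mem_inter.2 ⟨hx.1, mem_erase.2 ⟨hxv, hx.2⟩⟩⟩

lemma tau_delV {E : Finset (Finset α)} {C : Finset α} (hC : C ∈ minCovers E)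
    {v : α} (hv : v ∈ C) : tau (delV E v) = tau E - 1 := by
  obtain ⟨hsub, hcov, hcard⟩ := mem_minCovers.1 hC
  have htpos : 1 ≤ tau E := hcard ▸ card_pos.2 ⟨v, hv⟩
  obtain ⟨hsub', hcov'⟩ := erase_mem_stuff hC hv
  have hle : tau (delV E v) ≤ tau E - 1 := by
    have := tau_le hsub' hcov'
    rwa [card_erase_of_mem hv, hcard] at this
  have hge : tau E - 1 ≤ tau (delV E v) := by
    have hne : (coverSizes (delV E v)).Nonempty := ⟨_, _, hsub', hcov', rfl⟩
    obtain ⟨C₀, hs₀, hc₀, hcard₀⟩ := Nat.sInf_mem hne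
    have hvV : v ∈ V0 E := by
      obtain ⟨e, he, hpriv⟩ := exists_private hC hv
      refine mem_V0.2 ⟨e, he, ?_⟩
      have : v ∈ e ∩ C := by rw [hpriv]; simp
      exact (mem_inter.1 this).1
    have hcovi : IsCover E (insert v C₀) := by
      intro e he
      by_cases hve : v ∈ e
      · exact ⟨v, mem_inter.2 ⟨hve, mem_insert_self _ _⟩⟩
      · obtain ⟨x, hx⟩ := hc₀ e (mem_filter.2 ⟨he, hve⟩)
        rw [mem_inter] at hx
        exact ⟨x, mem_inter.2 ⟨hx.1, mem_insert_of_mem hx.2⟩⟩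
    have hsubi : insert v C₀ ⊆ V0 E :=
      insert_subset hvV (hs₀.trans V0_delV_subset)
    have := tau_le hsubi hcovi
    have hcardi : (insert v C₀).card ≤ C₀.card + 1 := card_insert_le _ _
    rw [hcard₀] at hcardi
    unfold tau at *
    omega
  omega

/-- min covers of `E` containing `v` are in bijection with min covers of `delV E v`. -/
lemma card_minCovers_delV {E : Finset (Finset α)} {v : α}
    (hv : ∃ C ∈ minCovers E, v ∈ C) :
    ((minCovers E).filter (fun C => v ∈ C)).card = (minCovers (delV E v)).card := by
  obtain ⟨Cw, hCw, hvCw⟩ := hv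
  have htau := tau_delV hCw hvCw
  have htpos : 1 ≤ tau E := by
    obtain ⟨_, _, hcard⟩ := mem_minCovers.1 hCw
    exact hcard ▸ card_pos.2 ⟨v, hvCw⟩
  apply card_bij (fun C _ => C.erase v)
  · rintro C hC
    rw [mem_filter] at hC
    obtain ⟨hC, hvC⟩ := hC
    obtain ⟨hs, hc⟩ := erase_mem_stuff hC hvC
    refine mem_minCovers.2 ⟨hs, hc, ?_⟩
    rw [card_erase_of_mem hvC, (mem_minCovers.1 hC).2.2, htau]
  · rintro C hC C' hC' hee
    rw [mem_filter] at hC hC'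
    have : insert v (C.erase v) = insert v (C'.erase v) := by rw [hee]
    rwa [insert_erase hC.2, insert_erase hC'.2] at this
  · rintro C₀ hC₀
    obtain ⟨hs₀, hc₀, hcard₀⟩ := mem_minCovers.1 hC₀
    have hvC₀ : v ∉ C₀ := fun h => not_mem_V0_delV (hs₀ h)
    refine ⟨insert v C₀, mem_filter.2 ⟨mem_minCovers.2 ⟨?_, ?_, ?_⟩, mem_insert_self _ _⟩, ?_⟩
    · refine insert_subset ?_ (hs₀.trans V0_delV_subset)
      obtain ⟨e, he, hpriv⟩ := exists_private hCw hvCw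
      refine mem_V0.2 ⟨e, he, ?_⟩
      have : v ∈ e ∩ Cw := by rw [hpriv]; simp
      exact (mem_inter.1 this).1
    · intro e he
      by_cases hve : v ∈ e
      · exact ⟨v, mem_inter.2 ⟨hve, mem_insert_self _ _⟩⟩
      · obtain ⟨x, hx⟩ := hc₀ e (mem_filter.2 ⟨he, hve⟩)
        rw [mem_inter] at hx
        exact ⟨x, mem_inter.2 ⟨hx.1, mem_insert_of_mem hx.2⟩⟩
    · rw [card_insert_of_notMem hvC₀, hcard₀, htau]; omega
    · rw [erase_insert hvC₀]

/-! ### MT lemmas -/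

lemma MTa_bddAbove (E : Finset (Finset α)) (i : ℕ) :
    BddAbove {n | ∃ T ⊆ E, T.card = i ∧ (T.sup id).card = n} := by
  refine ⟨(V0 E).card, ?_⟩
  rintro n ⟨T, hT, _, rfl⟩
  exact card_le_card (Finset.sup_le fun e he => le_sup (f := id) (hT he))

lemma le_MTa {E : Finset (Finset α)} {T : Finset (Finset α)} (hT : T ⊆ E) {i : ℕ}
    (hcard : T.card = i) : (T.sup id).card ≤ MTa E i :=
  le_csSup (MTa_bddAbove E i) ⟨T, hT, hcard, rfl⟩

lemma MTa_mono {E E' : Finset (Finset α)} (hsub : E' ⊆ E) (i : ℕ) :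
    MTa E' i ≤ MTa E i := by
  rcases Set.eq_empty_or_nonempty {n | ∃ T ⊆ E', T.card = i ∧ (T.sup id).card = n} with he | hne
  · rw [MTa, he]
    simp
  · obtain ⟨T, hT, hc, hs⟩ := Nat.sSup_mem hne (MTa_bddAbove E' i)
    rw [MTa, ← hs]
    exact le_MTa (hT.trans hsub) hc

/-! ### double counting -/

lemma double_count (E : Finset (Finset α)) :
    (minCovers E).card * tau E =
      ∑ v ∈ (minCovers E).sup id, ((minCovers E).filter (fun C => v ∈ C)).card := by
  have h1 : ∀ C ∈ minCovers E, C.card = tau E := fun C hC => (mem_minCovers.1 hC).2.2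
  have h2 : (minCovers E).card * tau E = ∑ C ∈ minCovers E, C.card := by
    rw [Finset.sum_congr rfl h1, Finset.sum_const, smul_eq_mul]
  rw [h2]
  have h3 : ∀ C ∈ minCovers E, C.card = ∑ v ∈ (minCovers E).sup id, if v ∈ C then 1 else 0 := by
    intro C hC
    rw [← Finset.card_filter]
    congr 1
    apply Subset.antisymm
    · intro x hx
      exact mem_filter.2 ⟨le_sup (f := id) hC hx, hx⟩
    · intro x hx
      rw [mem_filter] at hx
      exact hx.2
  rw [Finset.sum_congr rfl h3, Finset.sum_comm]
  congr 1
  ext v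
  rw [Finset.card_filter]


/-! ### towards Lemma Z -/

def nbrF (E : Finset (Finset α)) (C : Finset α) (z : α) : Finset α :=
  C.filter (fun c => ({z, c} : Finset α) ∈ E)

lemma mem_nbrF {E : Finset (Finset α)} {C : Finset α} {z c : α} :
    c ∈ nbrF E C z ↔ c ∈ C ∧ ({z, c} : Finset α) ∈ E := mem_filter

lemma two_edge_mem {E : Finset (Finset α)} {C' : Finset α} (hcov : IsCover E C')
    {z c : α} (hz : z ∉ C') (he : ({z, c} : Finset α) ∈ E) : c ∈ C' := by
  obtain ⟨x, hx⟩ := hcov _ he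
  rw [mem_inter, mem_insert, mem_singleton] at hx
  rcases hx.1 with rfl | rfl
  · exact absurd hx.2 hz
  · exact hx.2

lemma exchange_cover {E : Finset (Finset α)} {m₁ : Finset α}
    (hclass : ∀ e ∈ E, e ≠ m₁ → e.card = 2) {C C' : Finset α}
    (hCcov : IsCover E C) (hC'cov : IsCover E C') {S : Finset α} (hS : S ⊆ C')
    (hSC : ∀ x ∈ S, x ∉ C) (hSm : ∀ x ∈ S, x ∉ m₁) :
    IsCover E ((C' \ S) ∪ (C \ C').filter (fun d => ∃ s ∈ S, ({s, d} : Finset α) ∈ E)) := by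
  intro e he
  rcases (e ∩ (C' \ S)).eq_empty_or_nonempty with hemp | ⟨x, hx⟩
  · -- e ∩ C' ⊆ S
    have hsubS : ∀ x ∈ e, x ∈ C' → x ∈ S := by
      intro x hxe hxC'
      by_contra hxS
      exact absurd (mem_inter.2 ⟨hxe, mem_sdiff.2 ⟨hxC', hxS⟩⟩) (by simp [hemp])
    obtain ⟨x₀, hx₀⟩ := hC'cov e he
    rw [mem_inter] at hx₀
    have hx₀S : x₀ ∈ S := hsubS x₀ hx₀.1 hx₀.2
    have hem : e ≠ m₁ := by
      rintro rfl
      exact hSm x₀ hx₀S hx₀.1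
    have hcard2 := hclass e he hem
    obtain ⟨y, hy⟩ := hCcov e he
    rw [mem_inter] at hy
    have hyS : y ∉ S := fun hyS => hSC y hyS hy.2
    have hxy : x₀ ≠ y := fun h => hyS (h ▸ hx₀S)
    have hepair : e = {x₀, y} := by
      apply (eq_of_subset_of_card_le ?_ ?_).symm
      · intro u hu
        rw [mem_insert, mem_singleton] at hu
        rcases hu with rfl | rfl
        exacts [hx₀.1, hy.1]
      · rw [hcard2, card_pair hxy]
    have hyC' : y ∉ C' := fun hyC' => hyS (hsubS y hy.1 hyC')
    refine ⟨y, mem_inter.2 ⟨hy.1, mem_union_right _ ?_⟩⟩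
    exact mem_filter.2 ⟨mem_sdiff.2 ⟨hy.2, hyC'⟩, x₀, hx₀S, hepair ▸ he⟩
  · rw [mem_inter] at hx
    exact ⟨x, mem_inter.2 ⟨hx.1, mem_union_left _ hx.2⟩⟩

lemma exchange_card {E : Finset (Finset α)} {m₁ : Finset α}
    (hclass : ∀ e ∈ E, e ≠ m₁ → e.card = 2) {C C' : Finset α}
    (hC : C ∈ minCovers E) (hC' : C' ∈ minCovers E) {S : Finset α} (hS : S ⊆ C')
    (hSC : ∀ x ∈ S, x ∉ C) (hSm : ∀ x ∈ S, x ∉ m₁) :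
    S.card ≤ ((C \ C').filter (fun d => ∃ s ∈ S, ({s, d} : Finset α) ∈ E)).card := by
  obtain ⟨hsub, hcov, hcard⟩ := mem_minCovers.1 hC
  obtain ⟨hsub', hcov', hcard'⟩ := mem_minCovers.1 hC'
  have hcovX := exchange_cover hclass hcov hcov' hS hSC hSm
  have hsubX : (C' \ S) ∪ (C \ C').filter (fun d => ∃ s ∈ S, ({s, d} : Finset α) ∈ E) ⊆ V0 E := by
    apply union_subset (sdiff_subset.trans hsub')
    exact ((filter_subset _ _).trans sdiff_subset).trans hsub
  have h1 := tau_le hsubX hcovX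
  have h2 := card_union_le (C' \ S) ((C \ C').filter (fun d => ∃ s ∈ S, ({s, d} : Finset α) ∈ E))
  rw [card_sdiff_of_subset hS] at h2
  have h3 : S.card ≤ C'.card := card_le_card hS
  omega

lemma hall_cond {E : Finset (Finset α)} {m₁ : Finset α}
    (hclass : ∀ e ∈ E, e ≠ m₁ → e.card = 2) {C : Finset α} (hC : C ∈ minCovers E) :
    ∀ S : Finset α, S ⊆ ((minCovers E).sup id \ C) \ m₁ →
      S.card ≤ (S.biUnion (nbrF E C)).card := by
  intro S
  induction S using Finset.strongInduction with
  | _ S IH =>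
    intro hSL
    rcases S.eq_empty_or_nonempty with rfl | ⟨z, hzS⟩
    · simp
    have hzL := hSL hzS
    rw [mem_sdiff, mem_sdiff] at hzL
    obtain ⟨⟨hzZ, hzC⟩, hzm⟩ := hzL
    rw [Finset.mem_sup] at hzZ
    obtain ⟨C', hC', hzC'⟩ := hzZ
    have hC'cov := (mem_minCovers.1 hC').2.1
    have hSnC : ∀ x ∈ S, x ∉ C := by
      intro x hx
      have := hSL hx; rw [mem_sdiff, mem_sdiff] at this; exact this.1.2
    have hSnm : ∀ x ∈ S, x ∉ m₁ := by
      intro x hx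
      have := hSL hx; rw [mem_sdiff] at this; exact this.2
    have hND := exchange_card hclass hC hC' (S := S ∩ C') inter_subset_right
      (fun x hx => hSnC x (mem_inter.1 hx).1) (fun x hx => hSnm x (mem_inter.1 hx).1)
    set ND := (C \ C').filter (fun d => ∃ s ∈ S ∩ C', ({s, d} : Finset α) ∈ E) with hNDdef
    have hNDsub : ND ⊆ S.biUnion (nbrF E C) := by
      intro d hd
      rw [hNDdef, mem_filter] at hd
      obtain ⟨hdC, s, hs, hsd⟩ := hd
      exact mem_biUnion.2 ⟨s, (mem_inter.1 hs).1,
        mem_nbrF.2 ⟨(mem_sdiff.1 hdC).1, hsd⟩⟩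
    have hS2lt : S \ C' ⊂ S := by
      refine Finset.ssubset_iff_of_subset sdiff_subset |>.2 ⟨z, hzS, ?_⟩
      simp only [mem_sdiff, not_and, not_not]
      exact fun _ => hzC'
    have hS2 := IH _ hS2lt (sdiff_subset.trans hSL)
    have hS2sub : (S \ C').biUnion (nbrF E C) ⊆ C' := by
      intro c hc
      rw [mem_biUnion] at hc
      obtain ⟨s, hs, hcs⟩ := hc
      rw [mem_nbrF] at hcs
      exact two_edge_mem hC'cov (mem_sdiff.1 hs).2 hcs.2
    have hdisj : Disjoint ND ((S \ C').biUnion (nbrF E C)) := by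
      rw [disjoint_left]
      intro d hd hd2
      rw [hNDdef, mem_filter, mem_sdiff] at hd
      exact hd.1.2 (hS2sub hd2)
    have hunion : ND ∪ (S \ C').biUnion (nbrF E C) ⊆ S.biUnion (nbrF E C) :=
      union_subset hNDsub (biUnion_subset_biUnion_of_subset_left _ sdiff_subset)
    have hc1 := card_le_card hunion
    rw [card_union_of_disjoint hdisj] at hc1
    have hsplit := card_inter_add_card_sdiff S C'
    omega



lemma biUnion_union' (s t : Finset α) (f : α → Finset α) :
    (s ∪ t).biUnion f = s.biUnion f ∪ t.biUnion f := by
  ext x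
  simp only [mem_biUnion, mem_union, or_and_right, exists_or]

/-- From violators for each `a ∈ A`, get one tight set whose neighborhood contains `A`. -/
lemma exists_tight_SA {E : Finset (Finset α)} {C L : Finset α}
    (hH : ∀ S : Finset α, S ⊆ L → S.card ≤ (S.biUnion (nbrF E C)).card)
    {A : Finset α}
    (hviol : ∀ a ∈ A, ∃ S, S ⊆ L ∧ ((S.biUnion (nbrF E C)).erase a).card < S.card) :
    ∃ SA, SA ⊆ L ∧ (SA.biUnion (nbrF E C)).card = SA.card ∧ A ⊆ SA.biUnion (nbrF E C) := by
  induction A using Finset.induction_on with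
  | empty => exact ⟨∅, empty_subset _, by simp, by simp⟩
  | @insert a A' ha IH =>
    obtain ⟨SA', hSA'L, hSA't, hSA'A⟩ := IH (fun b hb => hviol b (mem_insert_of_mem hb))
    obtain ⟨S, hSL, hlt⟩ := hviol a (mem_insert_self _ _)
    have h1 := hH S hSL
    have haN : a ∈ S.biUnion (nbrF E C) := by
      by_contra haN
      rw [erase_eq_of_notMem haN] at hlt
      omega
    have herase := card_erase_of_mem haN
    have htS : (S.biUnion (nbrF E C)).card = S.card := by omega
    refine ⟨S ∪ SA', union_subset hSL hSA'L, ?_, ?_⟩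
    · have hbu : (S ∪ SA').biUnion (nbrF E C) =
        S.biUnion (nbrF E C) ∪ SA'.biUnion (nbrF E C) := biUnion_union' _ _ _
      have hint : (S ∩ SA').card ≤ ((S.biUnion (nbrF E C)) ∩ (SA'.biUnion (nbrF E C))).card := by
        refine le_trans (hH _ (inter_subset_left.trans hSL)) (card_le_card ?_)
        exact subset_inter (biUnion_subset_biUnion_of_subset_left _ inter_subset_left)
          (biUnion_subset_biUnion_of_subset_left _ inter_subset_right)
      have hc1 := card_union_add_card_inter (S.biUnion (nbrF E C)) (SA'.biUnion (nbrF E C))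
      have hc2 := card_union_add_card_inter S SA'
      have hge := hH (S ∪ SA') (union_subset hSL hSA'L)
      rw [hbu] at hge ⊢
      omega
    · intro b hb
      rw [mem_insert] at hb
      rw [biUnion_union']
      rcases hb with rfl | hb
      · exact mem_union_left _ haN
      · exact mem_union_right _ (hSA'A hb)

/-- The main contradiction: with a maximal `|C ∩ m₁|` minimum cover, a vertex of
`m₁` in `Z \ C` and a tight set catching all of `A = C ∩ m₁` are incompatible. -/
lemma no_tight_SA {E : Finset (Finset α)} {m₁ : Finset α}
    (hclass : ∀ e ∈ E, e ≠ m₁ → e.card = 2) {C : Finset α} (hC : C ∈ minCovers E)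
    (hmax : ∀ C'' ∈ minCovers E, (C'' ∩ m₁).card ≤ (C ∩ m₁).card)
    {zs : α} (hzsZ : zs ∈ (minCovers E).sup id) (hzsC : zs ∉ C) (hzsm : zs ∈ m₁)
    {SA : Finset α} (hSAL : SA ⊆ ((minCovers E).sup id \ C) \ m₁)
    (htight : (SA.biUnion (nbrF E C)).card = SA.card)
    (hAsub : C ∩ m₁ ⊆ SA.biUnion (nbrF E C)) : False := by
  obtain ⟨hCsub, hCcov, hCcard⟩ := mem_minCovers.1 hC
  rw [Finset.mem_sup] at hzsZ
  obtain ⟨C2, hC2, hzsC2⟩ := hzsZ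
  obtain ⟨hC2sub, hC2cov, hC2card⟩ := mem_minCovers.1 hC2
  have hzsC2' : zs ∈ C2 := hzsC2
  have hSAnC : ∀ x ∈ SA, x ∉ C := fun x hx => by
    have := hSAL hx; rw [mem_sdiff, mem_sdiff] at this; exact this.1.2
  have hSAnm : ∀ x ∈ SA, x ∉ m₁ := fun x hx => by
    have := hSAL hx; rw [mem_sdiff] at this; exact this.2
  rcases (SA ∩ C2).eq_empty_or_nonempty with hint | hint
  · -- case β : SA ∩ C2 = ∅
    have hNsub : SA.biUnion (nbrF E C) ⊆ C2 := by
      intro c hc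
      rw [mem_biUnion] at hc
      obtain ⟨s, hs, hcs⟩ := hc
      have hsC2 : s ∉ C2 := by
        intro hsC2
        exact absurd (mem_inter.2 ⟨hs, hsC2⟩) (by simp [hint])
      exact two_edge_mem hC2cov hsC2 (mem_nbrF.1 hcs).2
    have hins : insert zs (C ∩ m₁) ⊆ C2 ∩ m₁ := by
      intro x hx
      rw [mem_insert] at hx
      rcases hx with rfl | hx
      · exact mem_inter.2 ⟨hzsC2', hzsm⟩
      · exact mem_inter.2 ⟨hNsub (hAsub hx), (mem_inter.1 hx).2⟩
    have hzsA : zs ∉ C ∩ m₁ := fun h => hzsC (mem_inter.1 h).1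
    have := card_le_card hins
    rw [card_insert_of_notMem hzsA] at this
    have := hmax C2 hC2
    omega
  · -- case α : ∃ z ∈ SA ∩ C2
    set Sz := SA ∩ C2 with hSzdef
    set S2 := SA \ C2 with hS2def
    have hND := exchange_card hclass hC hC2 (S := Sz) inter_subset_right
      (fun x hx => hSAnC x (mem_inter.1 hx).1) (fun x hx => hSAnm x (mem_inter.1 hx).1)
    set ND := (C \ C2).filter (fun d => ∃ s ∈ Sz, ({s, d} : Finset α) ∈ E) with hNDdef
    have hNDsub : ND ⊆ SA.biUnion (nbrF E C) := by
      intro d hd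
      rw [hNDdef, mem_filter] at hd
      obtain ⟨hdC, s, hs, hsd⟩ := hd
      exact mem_biUnion.2 ⟨s, (mem_inter.1 hs).1, mem_nbrF.2 ⟨(mem_sdiff.1 hdC).1, hsd⟩⟩
    have hS2card := hall_cond hclass hC S2 (sdiff_subset.trans hSAL)
    have hNS2sub : S2.biUnion (nbrF E C) ⊆ C2 := by
      intro c hc
      rw [mem_biUnion] at hc
      obtain ⟨s, hs, hcs⟩ := hc
      exact two_edge_mem hC2cov (mem_sdiff.1 hs).2 (mem_nbrF.1 hcs).2
    have hNS2sub' : S2.biUnion (nbrF E C) ⊆ SA.biUnion (nbrF E C) :=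
      biUnion_subset_biUnion_of_subset_left _ sdiff_subset
    have hdisj : Disjoint ND (S2.biUnion (nbrF E C)) := by
      rw [disjoint_left]
      intro d hd hd2
      rw [hNDdef, mem_filter, mem_sdiff] at hd
      exact hd.1.2 (hNS2sub hd2)
    have hsplit := card_inter_add_card_sdiff SA C2
    rw [← hSzdef, ← hS2def] at hsplit
    have huni : ND ∪ S2.biUnion (nbrF E C) ⊆ SA.biUnion (nbrF E C) :=
      union_subset hNDsub hNS2sub'
    have hc1 := card_le_card huni
    rw [card_union_of_disjoint hdisj] at hc1
    -- all inequalities are equalities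
    have hNDeq : ND.card = Sz.card := by omega
    have hNS2eq : (S2.biUnion (nbrF E C)).card = S2.card := by omega
    have hseteq : ND ∪ S2.biUnion (nbrF E C) = SA.biUnion (nbrF E C) := by
      apply eq_of_subset_of_card_le huni
      rw [card_union_of_disjoint hdisj]
      omega
    -- the exchanged cover
    have hSzC2 : Sz ⊆ C2 := inter_subset_right
    have hcovX := exchange_cover hclass hCcov hC2cov (S := Sz) hSzC2
      (fun x hx => hSAnC x (mem_inter.1 hx).1) (fun x hx => hSAnm x (mem_inter.1 hx).1)
    have hdisjX : Disjoint (C2 \ Sz) ND := by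
      rw [disjoint_left]
      intro x hx hx2
      rw [hNDdef, mem_filter, mem_sdiff] at hx2
      exact hx2.1.2 (mem_sdiff.1 hx).1
    have hXmem : (C2 \ Sz) ∪ ND ∈ minCovers E := by
      refine mem_minCovers.2 ⟨?_, hcovX, ?_⟩
      · apply union_subset (sdiff_subset.trans hC2sub)
        exact ((filter_subset _ _).trans sdiff_subset).trans hCsub
      · rw [card_union_of_disjoint hdisjX, card_sdiff_of_subset hSzC2, hNDeq, hC2card]
        have : Sz.card ≤ tau E := hC2card ▸ card_le_card hSzC2
        omega
    have hmaxX := hmax _ hXmem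
    -- compute (C2 \ Sz ∪ ND) ∩ m₁
    have hm1 : ((C2 \ Sz) ∪ ND) ∩ m₁ = (C2 ∩ m₁) ∪ (ND ∩ m₁) := by
      ext x
      simp only [mem_inter, mem_union, mem_sdiff]
      constructor
      · rintro ⟨h1 | h1, h2⟩
        · exact Or.inl ⟨h1.1, h2⟩
        · exact Or.inr ⟨h1, h2⟩
      · rintro (⟨h1, h2⟩ | ⟨h1, h2⟩)
        · refine ⟨Or.inl ⟨h1, fun hx => ?_⟩, h2⟩
          exact hSAnm x (mem_inter.1 hx).1 h2
        · exact ⟨Or.inr h1, h2⟩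
    have hdisjm : Disjoint (C2 ∩ m₁) (ND ∩ m₁) := by
      rw [disjoint_left]
      intro x hx hx2
      rw [mem_inter, hNDdef, mem_filter, mem_sdiff] at hx2
      exact hx2.1.1.2 (mem_inter.1 hx).1
    -- split A over the two parts of N(SA)
    have hA1 : C ∩ m₁ ⊆ (ND ∩ m₁) ∪ ((C ∩ m₁) ∩ S2.biUnion (nbrF E C)) := by
      intro x hx
      have := hAsub hx
      rw [← hseteq, mem_union] at this
      rcases this with h | h
      · exact mem_union_left _ (mem_inter.2 ⟨h, (mem_inter.1 hx).2⟩)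
      · exact mem_union_right _ (mem_inter.2 ⟨hx, h⟩)
    have hdisjA : Disjoint (ND ∩ m₁) ((C ∩ m₁) ∩ S2.biUnion (nbrF E C)) := by
      rw [disjoint_left]
      intro x hx hx2
      exact disjoint_left.1 hdisj (mem_inter.1 hx).1 (mem_inter.1 hx2).2
    have hAcard : (C ∩ m₁).card ≤ (ND ∩ m₁).card + ((C ∩ m₁) ∩ S2.biUnion (nbrF E C)).card :=
      le_trans (card_le_card hA1) (card_union_le _ _)
    have hmX : ((C2 \ Sz) ∪ ND) ∩ m₁ = (C2 ∩ m₁) ∪ (ND ∩ m₁) := hm1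
    have hmXcard : (C2 ∩ m₁).card + (ND ∩ m₁).card ≤ (C ∩ m₁).card := by
      rw [← card_union_of_disjoint hdisjm, ← hmX]
      exact hmaxX
    have hsub2 : (C ∩ m₁) ∩ S2.biUnion (nbrF E C) ⊆ C2 ∩ m₁ := by
      intro x hx
      rw [mem_inter] at hx
      exact mem_inter.2 ⟨hNS2sub hx.2, (mem_inter.1 hx.1).2⟩
    have heq : (C ∩ m₁) ∩ S2.biUnion (nbrF E C) = C2 ∩ m₁ := by
      apply eq_of_subset_of_card_le hsub2
      omega
    have hzsin : zs ∈ (C ∩ m₁) ∩ S2.biUnion (nbrF E C) := by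
      rw [heq]
      exact mem_inter.2 ⟨hzsC2', hzsm⟩
    exact hzsC (mem_inter.1 (mem_inter.1 hzsin).1).1
  

lemma biUnion_erase (S : Finset α) (t : α → Finset α) (a : α) :
    S.biUnion (fun z => (t z).erase a) = (S.biUnion t).erase a := by
  ext x
  simp only [mem_biUnion, mem_erase]
  constructor
  · rintro ⟨z, hz, hxa, hxz⟩
    exact ⟨hxa, z, hz, hxz⟩
  · rintro ⟨hxa, z, hz, hxz⟩
    exact ⟨z, hz, hxa, hxz⟩

/-- Hall's theorem, in the form we need. -/
lemma exists_matching_fun {L : Finset α} {t : α → Finset α}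
    (hH : ∀ S ⊆ L, S.card ≤ (S.biUnion t).card) :
    ∃ f : α → α, Set.InjOn f L ∧ ∀ z ∈ L, f z ∈ t z := by
  classical
  have hcond : ∀ s : Finset {x // x ∈ L}, s.card ≤ (s.biUnion (fun z => t z.val)).card := by
    intro s
    have h1 : s.biUnion (fun z => t z.val) = (s.image Subtype.val).biUnion t := by
      rw [Finset.image_biUnion]
    have h2 : (s.image Subtype.val).card = s.card :=
      card_image_of_injective s Subtype.val_injective
    have h3 : s.image Subtype.val ⊆ L := by
      intro x hx
      rw [mem_image] at hx
      obtain ⟨z, _, rfl⟩ := hx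
      exact z.2
    rw [h1, ← h2]
    exact hH _ h3
  obtain ⟨f, hfinj, hft⟩ :=
    (Finset.all_card_le_biUnion_card_iff_existsInjective' (fun (z : {x // x ∈ L}) => t z.val)).1
      hcond
  refine ⟨fun z => if h : z ∈ L then f ⟨z, h⟩ else z, ?_, ?_⟩
  · intro x hx y hy hxy
    simp only [Finset.mem_coe] at hx hy
    dsimp only at hxy
    rw [dif_pos hx, dif_pos hy] at hxy
    exact Subtype.ext_iff.1 (hfinj hxy)
  · intro z hz
    dsimp only
    rw [dif_pos hz]
    exact hft ⟨z, hz⟩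

/-- From `T₀ ⊆ E` of size `≤ tau E` covering `Z`, conclude Lemma Z's bound. -/
lemma MTa_of_T₀ {E : Finset (Finset α)} {C : Finset α} (hC : C ∈ minCovers E)
    {T₀ : Finset (Finset α)} (hT₀E : T₀ ⊆ E) (hT₀card : T₀.card ≤ tau E)
    (hcov : (minCovers E).sup id ⊆ T₀.sup id) :
    ((minCovers E).sup id).card ≤ MTa E (tau E) := by
  have htE : tau E ≤ E.card := by
    choose! g hgE hgP using (fun c (hc : c ∈ C) => exists_private hC hc)
    obtain ⟨hsub, hcovC, hcard⟩ := mem_minCovers.1 hC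
    have hinj : Set.InjOn g C := by
      intro x hx y hy hxy
      have h1 := hgP x hx
      have h2 := hgP y hy
      rw [hxy, h2] at h1
      exact (singleton_inj.1 h1).symm
    calc tau E = C.card := hcard.symm
    _ = (C.image g).card := (card_image_of_injOn hinj).symm
    _ ≤ E.card := card_le_card (by
        intro e he
        rw [mem_image] at he
        obtain ⟨c, hc, rfl⟩ := he
        exact hgE c hc)
  obtain ⟨T, hT₀T, hTE, hTcard⟩ := Finset.exists_subsuperset_card_eq hT₀E hT₀card htE
  calc ((minCovers E).sup id).card ≤ (T₀.sup id).card := card_le_card hcov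
  _ ≤ (T.sup id).card := card_le_card (Finset.sup_mono hT₀T)
  _ ≤ MTa E (tau E) := le_MTa hTE hTcard

/-- **Lemma Z**: the union of all minimum covers can be covered by `tau E` edges. -/
lemma lemmaZ {E : Finset (Finset α)} {m₀ : Finset α}
    (hclass : ∀ e ∈ E, e ≠ m₀ → e.card = 2) (hne : (minCovers E).Nonempty) :
    ((minCovers E).sup id).card ≤ MTa E (tau E) := by
  classical
  -- normalize the exceptional edge
  set m₁ := if m₀ ∈ E then m₀ else ∅ with hm₁def
  have hclass1 : ∀ e ∈ E, e ≠ m₁ → e.card = 2 := by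
    intro e he hne1
    by_cases hm : m₀ ∈ E
    · exact hclass e he (by rwa [hm₁def, if_pos hm] at hne1)
    · exact hclass e he (fun h => hm (h ▸ he))
  have hm₁E : ∀ z : α, z ∈ m₁ → m₁ ∈ E := by
    intro z hz
    by_cases hm : m₀ ∈ E
    · rwa [hm₁def, if_pos hm]
    · rw [hm₁def, if_neg hm] at hz
      exact absurd hz (notMem_empty z)
  obtain ⟨C, hC, hmax⟩ := Finset.exists_max_image (minCovers E) (fun C => (C ∩ m₁).card) hne
  obtain ⟨hCsub, hCcov, hCcard⟩ := mem_minCovers.1 hC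
  set Z := (minCovers E).sup id with hZdef
  set L := (Z \ C) \ m₁ with hLdef
  have hH : ∀ S ⊆ L, S.card ≤ (S.biUnion (nbrF E C)).card := hall_cond hclass1 hC
  choose! g hgE hgP using (fun c (hc : c ∈ C) => exists_private hC hc)
  have hMCsub : ∀ f : α → α, (∀ z ∈ L, f z ∈ nbrF E C z) → L.image f ⊆ C := by
    intro f hf c hc
    rw [mem_image] at hc
    obtain ⟨z, hz, rfl⟩ := hc
    exact (mem_nbrF.1 (hf z hz)).1
  have hMEsub : ∀ f : α → α, (∀ z ∈ L, f z ∈ nbrF E C z) →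
      L.image (fun z => ({z, f z} : Finset α)) ⊆ E := by
    intro f hf e he
    rw [mem_image] at he
    obtain ⟨z, hz, rfl⟩ := he
    exact (mem_nbrF.1 (hf z hz)).2
  rcases ((Z \ C) ∩ m₁).eq_empty_or_nonempty with hW | hW
  · -- Case 1 : no vertex of `m₁` outside `C` is needed
    obtain ⟨f, hfinj, hf⟩ := exists_matching_fun hH
    set ME := L.image (fun z => ({z, f z} : Finset α)) with hMEdef
    set MC := L.image f with hMCdef
    set T₀ := ME ∪ (C \ MC).image g with hT₀def
    have hMCC : MC ⊆ C := hMCsub f hf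
    apply MTa_of_T₀ hC (T₀ := T₀)
    · apply union_subset (hMEsub f hf)
      intro e he
      rw [mem_image] at he
      obtain ⟨c, hc, rfl⟩ := he
      exact hgE c (mem_sdiff.1 hc).1
    · have h1 : ME.card ≤ L.card := card_image_le
      have h2 : ((C \ MC).image g).card ≤ C.card - MC.card := by
        rw [← card_sdiff_of_subset hMCC]
        exact card_image_le
      have h3 : MC.card = L.card := card_image_of_injOn hfinj
      have h4 := card_union_le ME ((C \ MC).image g)
      have h5 : MC.card ≤ C.card := card_le_card hMCC
      rw [hT₀def, ← hCcard]
      omega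
    · intro v hv
      rw [Finset.mem_sup]
      by_cases hvC : v ∈ C
      · by_cases hvMC : v ∈ MC
        · rw [hMCdef, mem_image] at hvMC
          obtain ⟨z, hz, rfl⟩ := hvMC
          exact ⟨{z, f z}, mem_union_left _ (mem_image_of_mem _ hz), by simp⟩
        · refine ⟨g v, mem_union_right _ (mem_image_of_mem _ (mem_sdiff.2 ⟨hvC, hvMC⟩)), ?_⟩
          have : v ∈ g v ∩ C := by rw [hgP v hvC]; simp
          exact (mem_inter.1 this).1
      · have hvL : v ∈ L := by
          rw [hLdef, mem_sdiff, mem_sdiff]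
          refine ⟨⟨hv, hvC⟩, fun hvm => ?_⟩
          exact absurd (mem_inter.2 ⟨mem_sdiff.2 ⟨hv, hvC⟩, hvm⟩) (Finset.eq_empty_iff_forall_notMem.1 hW v)
        exact ⟨{v, f v}, mem_union_left _ (mem_image_of_mem _ hvL), by simp⟩
  · -- Case 2 : some vertex of `m₁` lies in `Z \ C`
    obtain ⟨zs, hzs⟩ := hW
    rw [mem_inter, mem_sdiff] at hzs
    obtain ⟨⟨hzsZ, hzsC⟩, hzsm⟩ := hzs
    have hm₁ : m₁ ∈ E := hm₁E zs hzsm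
    -- a saturating matching avoiding some `a ∈ C ∩ m₁` exists
    have hav : ∃ a ∈ C ∩ m₁, ∀ S ⊆ L, S.card ≤ ((S.biUnion (nbrF E C)).erase a).card := by
      by_contra hno
      push_neg at hno
      have hviol : ∀ a ∈ C ∩ m₁, ∃ S, S ⊆ L ∧
          ((S.biUnion (nbrF E C)).erase a).card < S.card := by
        intro a ha
        obtain ⟨S, hSL, hlt⟩ := hno a ha
        exact ⟨S, hSL, by omega⟩
      obtain ⟨SA, hSAL, htight, hAsub⟩ := exists_tight_SA hH hviol
      exact no_tight_SA hclass1 hC (fun C'' h => hmax C'' h) hzsZ hzsC hzsm hSAL htight hAsub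
    obtain ⟨a, haA, hHa⟩ := hav
    have hH' : ∀ S ⊆ L, S.card ≤ (S.biUnion (fun z => (nbrF E C z).erase a)).card := by
      intro S hS
      rw [biUnion_erase]
      exact hHa S hS
    obtain ⟨f, hfinj, hf'⟩ := exists_matching_fun hH'
    have hf : ∀ z ∈ L, f z ∈ nbrF E C z := fun z hz => mem_of_mem_erase (hf' z hz)
    have hfa : ∀ z ∈ L, f z ≠ a := fun z hz => ne_of_mem_erase (hf' z hz)
    set ME := L.image (fun z => ({z, f z} : Finset α)) with hMEdef
    set MC := L.image f with hMCdef
    set T₀ := insert m₁ (ME ∪ (C \ insert a MC).image g) with hT₀def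
    have hMCC : MC ⊆ C := hMCsub f hf
    have haMC : a ∉ MC := by
      rw [hMCdef, mem_image]
      rintro ⟨z, hz, hfz⟩
      exact hfa z hz hfz
    have haC : a ∈ C := (mem_inter.1 haA).1
    have ham : a ∈ m₁ := (mem_inter.1 haA).2
    have hiMC : insert a MC ⊆ C := insert_subset haC hMCC
    apply MTa_of_T₀ hC (T₀ := T₀)
    · apply insert_subset hm₁
      apply union_subset (hMEsub f hf)
      intro e he
      rw [mem_image] at he
      obtain ⟨c, hc, rfl⟩ := he
      exact hgE c (mem_sdiff.1 hc).1
    · have h1 : ME.card ≤ L.card := card_image_le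
      have h2 : ((C \ insert a MC).image g).card ≤ C.card - (insert a MC).card := by
        rw [← card_sdiff_of_subset hiMC]
        exact card_image_le
      have h3 : MC.card = L.card := card_image_of_injOn hfinj
      have h4 := card_union_le ME ((C \ insert a MC).image g)
      have h5 : (insert a MC).card = MC.card + 1 := card_insert_of_notMem haMC
      have h6 : (insert a MC).card ≤ C.card := card_le_card hiMC
      have h7 := card_insert_le m₁ (ME ∪ (C \ insert a MC).image g)
      rw [hT₀def, ← hCcard]
      omega
    · intro v hv
      rw [Finset.mem_sup]
      by_cases hvC : v ∈ C
      · by_cases hvMC : v ∈ insert a MC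
        · rcases mem_insert.1 hvMC with rfl | hvMC'
          · exact ⟨m₁, mem_insert_self _ _, ham⟩
          · rw [hMCdef, mem_image] at hvMC'
            obtain ⟨z, hz, rfl⟩ := hvMC'
            exact ⟨{z, f z}, mem_insert_of_mem (mem_union_left _ (mem_image_of_mem _ hz)),
              by simp⟩
        · refine ⟨g v, mem_insert_of_mem (mem_union_right _
            (mem_image_of_mem _ (mem_sdiff.2 ⟨hvC, hvMC⟩))), ?_⟩
          have : v ∈ g v ∩ C := by rw [hgP v hvC]; simp
          exact (mem_inter.1 this).1
      · by_cases hvm : v ∈ m₁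
        · exact ⟨m₁, mem_insert_self _ _, hvm⟩
        · have hvL : v ∈ L := by
            rw [hLdef, mem_sdiff, mem_sdiff]
            exact ⟨⟨hv, hvC⟩, hvm⟩
          exact ⟨{v, f v}, mem_insert_of_mem (mem_union_left _ (mem_image_of_mem _ hvL)),
            by simp⟩


/-- The abstract counting theorem. -/
theorem abstract_main : ∀ (n : ℕ) (E : Finset (Finset α)) (m₀ : Finset α),
    (∀ e ∈ E, e ≠ m₀ → e.card = 2) → tau E = n →
    (minCovers E).card * n.factorial ≤ ∏ i ∈ Icc 1 n, MTa E i := by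
  intro n
  induction n with
  | zero =>
    intro E m₀ hclass htau
    have h1 : (minCovers E).card ≤ 1 := by
      rw [card_le_one]
      intro C hC C' hC'
      have h1 := (mem_minCovers.1 hC).2.2
      have h2 := (mem_minCovers.1 hC').2.2
      rw [htau] at h1 h2
      rw [card_eq_zero.1 h1, card_eq_zero.1 h2]
    simpa using h1
  | succ r IH =>
    intro E m₀ hclass htau
    rcases (minCovers E).eq_empty_or_nonempty with hemp | hne
    · simp [hemp]
    have hZ : ∀ v ∈ (minCovers E).sup id, ∃ C ∈ minCovers E, v ∈ C := by
      intro v hv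
      rwa [Finset.mem_sup] at hv
    -- termwise bound
    have hterm : ∀ v ∈ (minCovers E).sup id,
        ((minCovers E).filter (fun C => v ∈ C)).card * r.factorial ≤
          ∏ i ∈ Icc 1 r, MTa E i := by
      intro v hv
      obtain ⟨C, hC, hvC⟩ := hZ v hv
      rw [card_minCovers_delV ⟨C, hC, hvC⟩]
      have htv : tau (delV E v) = r := by rw [tau_delV hC hvC, htau]; omega
      calc (minCovers (delV E v)).card * r.factorial
          ≤ ∏ i ∈ Icc 1 r, MTa (delV E v) i :=
            IH (delV E v) m₀ (fun e he h2 => hclass e (delV_subset he) h2) htv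
        _ ≤ ∏ i ∈ Icc 1 r, MTa E i :=
            Finset.prod_le_prod' (fun i _ => MTa_mono delV_subset i)
    have hsum := double_count E
    rw [htau] at hsum
    have hZcard : ((minCovers E).sup id).card ≤ MTa E (r + 1) := by
      have := lemmaZ (E := E) (m₀ := m₀) hclass hne
      rwa [htau] at this
    calc (minCovers E).card * (r + 1).factorial
        = ((minCovers E).card * (r + 1)) * r.factorial := by
          rw [Nat.factorial_succ]; ring
      _ = (∑ v ∈ (minCovers E).sup id, ((minCovers E).filter (fun C => v ∈ C)).card)
            * r.factorial := by rw [hsum]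
      _ = ∑ v ∈ (minCovers E).sup id,
            ((minCovers E).filter (fun C => v ∈ C)).card * r.factorial := by
          rw [Finset.sum_mul]
      _ ≤ ∑ _v ∈ (minCovers E).sup id, ∏ i ∈ Icc 1 r, MTa E i :=
          Finset.sum_le_sum hterm
      _ = ((minCovers E).sup id).card * ∏ i ∈ Icc 1 r, MTa E i := by
          rw [Finset.sum_const, smul_eq_mul]
      _ ≤ MTa E (r + 1) * ∏ i ∈ Icc 1 r, MTa E i :=
          Nat.mul_le_mul_right _ hZcard
      _ = ∏ i ∈ Icc 1 (r + 1), MTa E i := by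
          rw [Finset.prod_Icc_succ_top (Nat.le_add_left 1 r), mul_comm]

end TUB


section Bridge
open TUB
variable {α : Type*} [DecidableEq α]

lemma SC.mem_minNonFaces' {K : SC α} {F : Finset α} :
    F ∈ K.minNonFaces ↔ F ⊆ K.verts ∧ F ∉ K.faces ∧ ∀ G ∈ F.powerset, G ≠ F → G ∈ K.faces := by
  simp [SC.minNonFaces, Finset.mem_filter, Finset.mem_powerset, and_assoc]

lemma SC.face_iff {K : SC α} {F : Finset α} (hF : F ⊆ K.verts) :
    F ∈ K.faces ↔ ∀ e ∈ K.minNonFaces, ¬ e ⊆ F := by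
  constructor
  · intro hFf e he hsub
    exact (SC.mem_minNonFaces'.1 he).2.1 (K.down_closed F hFf e hsub)
  · intro hall
    by_contra hFf
    obtain ⟨G, hG, hGmin⟩ := Finset.exists_min_image (F.powerset.filter (· ∉ K.faces))
      Finset.card ⟨F, by simp [Finset.mem_filter, hFf]⟩
    rw [Finset.mem_filter, Finset.mem_powerset] at hG
    refine hall G (SC.mem_minNonFaces'.2 ⟨hG.1.trans hF, hG.2, ?_⟩) hG.1
    intro G' hG' hne
    rw [Finset.mem_powerset] at hG'
    by_contra hG'f
    have hlt : G'.card < G.card := Finset.card_lt_card (hG'.ssubset_of_ne hne)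
    have := hGmin G' (Finset.mem_filter.2 ⟨Finset.mem_powerset.2 (hG'.trans hG.1), hG'f⟩)
    omega

lemma SC.cover_iff {K : SC α} {C : Finset α} (hC : C ⊆ K.verts) :
    IsCover K.minNonFaces C ↔ K.verts \ C ∈ K.faces := by
  constructor
  · intro h
    rw [SC.face_iff Finset.sdiff_subset]
    intro e he hsub
    obtain ⟨x, hx⟩ := h e he
    rw [Finset.mem_inter] at hx
    exact (Finset.mem_sdiff.1 (hsub hx.1)).2 hx.2
  · intro h e he
    by_contra hemp
    rw [Finset.not_nonempty_iff_eq_empty] at hemp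
    refine ((SC.face_iff Finset.sdiff_subset).1 h) e he ?_
    intro x hx
    rw [Finset.mem_sdiff]
    refine ⟨(SC.mem_minNonFaces'.1 he).1 hx, fun hxC => ?_⟩
    exact absurd (Finset.mem_inter.2 ⟨hx, hxC⟩) (by simp [hemp])

end Bridge

open SC in
/-- A simplicial complex of dimension `d-1` on `n` vertices all of whose minimal non-faces
have exactly two vertices, except possibly one, satisfies the Taylor upper bound. -/
theorem taylorUB_of_almost_quadratic {α : Type*} [DecidableEq α] (K : SC α)
    (h : ∃ m₀ : Finset α, ∀ F ∈ K.minNonFaces, F ≠ m₀ → F.card = 2) :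
    TaylorUB K := by
  classical
  obtain ⟨m₀, hm₀⟩ := h
  show (K.fCard K.dimP1 : ℚ) ≤ K.taylorUBval
  rcases K.faces.eq_empty_or_nonempty with hemp | hfne
  · have h0 : K.fCard K.dimP1 = 0 := by simp [SC.fCard, hemp]
    rw [h0, SC.taylorUBval]
    push_cast
    exact div_nonneg (Finset.prod_nonneg fun i _ => by positivity) (by positivity)
  · have hV0 : TUB.V0 K.minNonFaces ⊆ K.verts := by
      intro x hx
      rw [TUB.mem_V0] at hx
      obtain ⟨e, he, hxe⟩ := hx
      exact (SC.mem_minNonFaces'.1 he).1 hxe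
    obtain ⟨F, hFf, hFcard⟩ := Finset.exists_mem_eq_sup K.faces hfne Finset.card
    have hFcard' : F.card = K.dimP1 := hFcard.symm
    have hFv : F ⊆ K.verts := K.subset_verts F hFf
    have hdn : K.dimP1 ≤ K.verts.card := by
      rw [SC.dimP1]
      exact Finset.sup_le fun F' hF' => Finset.card_le_card (K.subset_verts F' hF')
    -- a small cover coming from the maximal face F
    have hcov1 : TUB.IsCover K.minNonFaces ((K.verts \ F) ∩ TUB.V0 K.minNonFaces) := by
      intro e he
      have hne : ¬ e ⊆ F := (SC.face_iff hFv).1 hFf e he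
      obtain ⟨x, hxe, hxF⟩ := Finset.not_subset.1 hne
      exact ⟨x, Finset.mem_inter.2 ⟨hxe, Finset.mem_inter.2
        ⟨Finset.mem_sdiff.2 ⟨(SC.mem_minNonFaces'.1 he).1 hxe, hxF⟩,
         TUB.mem_V0.2 ⟨e, he, hxe⟩⟩⟩⟩
    have htau : TUB.tau K.minNonFaces = K.verts.card - K.dimP1 := by
      have htle : TUB.tau K.minNonFaces ≤ K.verts.card - K.dimP1 := by
        have h1 := TUB.tau_le Finset.inter_subset_right hcov1
        have h2 : ((K.verts \ F) ∩ TUB.V0 K.minNonFaces).card ≤ (K.verts \ F).card :=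
          Finset.card_le_card Finset.inter_subset_left
        have h3 : (K.verts \ F).card = K.verts.card - F.card := Finset.card_sdiff_of_subset hFv
        omega
      have htge : K.verts.card - K.dimP1 ≤ TUB.tau K.minNonFaces := by
        show K.verts.card - K.dimP1 ≤ sInf (TUB.coverSizes K.minNonFaces)
        refine le_csInf ?_ ?_
        · exact ⟨((K.verts \ F) ∩ TUB.V0 K.minNonFaces).card,
            ⟨_, Finset.inter_subset_right, hcov1, rfl⟩⟩
        rintro k ⟨C, hCsub, hCcov, rfl⟩
        have hCv : C ⊆ K.verts := hCsub.trans hV0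
        have hface := (SC.cover_iff hCv).1 hCcov
        have h1 : (K.verts \ C).card ≤ K.dimP1 := by
          rw [SC.dimP1]
          exact Finset.le_sup hface
        have h2 : (K.verts \ C).card = K.verts.card - C.card := Finset.card_sdiff_of_subset hCv
        have h3 : C.card ≤ K.verts.card := Finset.card_le_card hCv
        omega
      omega
    have hfc : (TUB.minCovers K.minNonFaces).card = K.fCard K.dimP1 := by
      rw [SC.fCard]
      apply Finset.card_bij (fun C _ => K.verts \ C)
      · intro C hC
        obtain ⟨hCsub, hCcov, hCcard⟩ := TUB.mem_minCovers.1 hC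
        have hCv : C ⊆ K.verts := hCsub.trans hV0
        refine Finset.mem_filter.2 ⟨(SC.cover_iff hCv).1 hCcov, ?_⟩
        have h2 : (K.verts \ C).card = K.verts.card - C.card := Finset.card_sdiff_of_subset hCv
        rw [hCcard, htau] at h2
        omega
      · intro C₁ h₁ C₂ h₂ heq
        have h1v : C₁ ⊆ K.verts := ((TUB.mem_minCovers.1 h₁).1).trans hV0
        have h2v : C₂ ⊆ K.verts := ((TUB.mem_minCovers.1 h₂).1).trans hV0
        have := congrArg (fun s => K.verts \ s) heq
        simpa [Finset.sdiff_sdiff_eq_self h1v, Finset.sdiff_sdiff_eq_self h2v] using this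
      · intro F₀ hF₀
        rw [Finset.mem_filter] at hF₀
        obtain ⟨hF₀f, hF₀card⟩ := hF₀
        have hF₀v : F₀ ⊆ K.verts := K.subset_verts _ hF₀f
        have hCsubV0 : K.verts \ F₀ ⊆ TUB.V0 K.minNonFaces := by
          intro c hc
          by_contra hcV0
          have hcv : c ∈ K.verts := (Finset.mem_sdiff.1 hc).1
          have hcF : c ∉ F₀ := (Finset.mem_sdiff.1 hc).2
          have hface : insert c F₀ ∈ K.faces := by
            rw [SC.face_iff (Finset.insert_subset hcv hF₀v)]
            intro e he hsub
            have hesub : e ⊆ F₀ := by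
              intro x hx
              have hxi := hsub hx
              rw [Finset.mem_insert] at hxi
              rcases hxi with rfl | hxF
              · exact absurd (TUB.mem_V0.2 ⟨e, he, hx⟩) hcV0
              · exact hxF
            exact (SC.face_iff hF₀v).1 hF₀f e he hesub
          have hle : (insert c F₀).card ≤ K.dimP1 := by
            rw [SC.dimP1]
            exact Finset.le_sup hface
          rw [Finset.card_insert_of_notMem hcF, hF₀card] at hle
          omega
        refine ⟨K.verts \ F₀, TUB.mem_minCovers.2 ⟨hCsubV0, ?_, ?_⟩, ?_⟩
        · rw [SC.cover_iff Finset.sdiff_subset, Finset.sdiff_sdiff_eq_self hF₀v]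
          exact hF₀f
        · rw [Finset.card_sdiff_of_subset hF₀v, hF₀card, htau]
        · rw [Finset.sdiff_sdiff_eq_self hF₀v]
    have main := TUB.abstract_main (K.verts.card - K.dimP1) K.minNonFaces m₀ hm₀ htau
    rw [hfc] at main
    have hMT : ∀ i, K.MT i = TUB.MTa K.minNonFaces i := fun i => rfl
    show (K.fCard K.dimP1 : ℚ) ≤
      (∏ i ∈ Finset.Icc 1 (K.verts.card - K.dimP1), (K.MT i : ℚ)) /
        (Nat.factorial (K.verts.card - K.dimP1))
    rw [le_div_iff₀ (by positivity : (0:ℚ) < (Nat.factorial (K.verts.card - K.dimP1) : ℚ))]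
    calc (K.fCard K.dimP1 : ℚ) * (Nat.factorial (K.verts.card - K.dimP1) : ℚ)
        = ((K.fCard K.dimP1 * Nat.factorial (K.verts.card - K.dimP1) : ℕ) : ℚ) := by
          push_cast; ring
      _ ≤ ((∏ i ∈ Finset.Icc 1 (K.verts.card - K.dimP1), TUB.MTa K.minNonFaces i : ℕ) : ℚ) := by
          exact_mod_cast main
      _ = ∏ i ∈ Finset.Icc 1 (K.verts.card - K.dimP1), (K.MT i : ℚ) := by
          rw [Nat.cast_prod]
          exact Finset.prod_congr rfl fun i _ => by rw [hMT]
end
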